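/- arXiv:1712.03577 — 6 statements merged into one kernel-verified Lean document; each statement's English description precedes it below -/
import Mathlib

section
/- If f : ℝⁿ → ℝ is μ-strongly convex and differentiable with L-Lipschitz gradient, then for all x, y: ⟨∇f(x) − ∇f(y), x − y⟩ ≥ (1/(L+μ))‖∇f(x) − ∇f(y)‖² + (Lμ/(L+μ))‖x − y‖². -/
open InnerProductSpace

variable {E : Type*} [NormedAddCommGroup E] [InnerProductSpace ℝ E] [CompleteSpace E]

lemma line_deriv {f : E → ℝ} {f' : E → E} (hdiff : ∀ x, HasGradientAt f (f' x) x)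
    (x v : E) (t : ℝ) :
    HasDerivAt (fun s : ℝ => f (x + s • v)) ⟪f' (x + t • v), v⟫_ℝ t := by
  have hc : HasDerivAt (fun s : ℝ => x + s • v) v t := by
    simpa using ((hasDerivAt_id t).smul_const v).const_add x
  have := (hdiff (x + t • v)).hasFDerivAt.comp_hasDerivAt t hc
  simp only [toDual_apply_apply] at this
  exact this

lemma descent {L : ℝ} (hL : 0 ≤ L)
    {f : E → ℝ} {f' : E → E} (hdiff : ∀ x, HasGradientAt f (f' x) x)
    (hlip : ∀ x y, ‖f' x - f' y‖ ≤ L * ‖x - y‖) (x y : E) :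
    f y ≤ f x + ⟪f' x, y - x⟫_ℝ + L / 2 * ‖y - x‖ ^ 2 := by
  set v := y - x with hv
  set ψ : ℝ → ℝ := fun t => f (x + t • v) - t * ⟪f' x, v⟫_ℝ - L / 2 * t ^ 2 * ‖v‖ ^ 2 with hψ
  have hd : ∀ t : ℝ, HasDerivAt ψ (⟪f' (x + t • v) - f' x, v⟫_ℝ - L * t * ‖v‖ ^ 2) t := by
    intro t
    have h1 := line_deriv hdiff x v t
    have h2 : HasDerivAt (fun t : ℝ => t * ⟪f' x, v⟫_ℝ) ⟪f' x, v⟫_ℝ t := by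
      simpa using (hasDerivAt_id t).mul_const ⟪f' x, v⟫_ℝ
    have h3 : HasDerivAt (fun t : ℝ => L / 2 * t ^ 2 * ‖v‖ ^ 2) (L * t * ‖v‖ ^ 2) t := by
      have := ((hasDerivAt_pow 2 t).const_mul (L / 2)).mul_const (‖v‖ ^ 2)
      exact this.congr_deriv (by push_cast; ring)
    have := (h1.sub h2).sub h3
    exact this.congr_deriv (by rw [inner_sub_left])
  have hderiv_nonpos : ∀ t ∈ Set.Icc (0:ℝ) 1, deriv ψ t ≤ 0 := by
    intro t ht
    rw [(hd t).deriv]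
    have h1 : ⟪f' (x + t • v) - f' x, v⟫_ℝ ≤ ‖f' (x + t • v) - f' x‖ * ‖v‖ :=
      real_inner_le_norm _ _
    have h2 : ‖f' (x + t • v) - f' x‖ ≤ L * ‖(x + t • v) - x‖ := hlip _ _
    have h3 : ‖(x + t • v) - x‖ = t * ‖v‖ := by
      simp [norm_smul, abs_of_nonneg ht.1]
    rw [h3] at h2
    have h4 : ⟪f' (x + t • v) - f' x, v⟫_ℝ ≤ L * t * ‖v‖ ^ 2 := by
      calc ⟪f' (x + t • v) - f' x, v⟫_ℝ ≤ ‖f' (x + t • v) - f' x‖ * ‖v‖ := h1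
        _ ≤ L * (t * ‖v‖) * ‖v‖ := mul_le_mul_of_nonneg_right h2 (norm_nonneg v)
        _ = L * t * ‖v‖ ^ 2 := by ring
    linarith
  have hmono : AntitoneOn ψ (Set.Icc (0:ℝ) 1) := by
    apply antitoneOn_of_deriv_nonpos (convex_Icc 0 1)
    · exact fun t _ => ((hd t).differentiableAt).continuousAt.continuousWithinAt
    · intro t ht
      exact ((hd t).differentiableAt).differentiableWithinAt
    · intro t ht
      exact hderiv_nonpos t (interior_subset ht)
  have := hmono (Set.left_mem_Icc.2 zero_le_one) (Set.right_mem_Icc.2 zero_le_one) zero_le_one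
  simp only [hψ] at this
  simp only [zero_smul, add_zero, one_smul, one_pow] at this
  have hxy : x + v = y := by rw [hv]; abel
  rw [hxy] at this
  linarith

lemma cocoercive {C : ℝ} (hC : 0 < C) {g : E → ℝ} {g' : E → E}
    (hlow : ∀ a b, g a + ⟪g' a, b - a⟫_ℝ ≤ g b)
    (hup : ∀ a b, g b ≤ g a + ⟪g' a, b - a⟫_ℝ + C / 2 * ‖b - a‖ ^ 2)
    (x y : E) : (1 / C) * ‖g' x - g' y‖ ^ 2 ≤ ⟪g' x - g' y, x - y⟫_ℝ := by
  have key : ∀ x y : E, g x - ⟪g' x, x⟫_ℝ ≤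
      g y - ⟪g' x, y⟫_ℝ - 1 / (2 * C) * ‖g' y - g' x‖ ^ 2 := by
    intro x y
    set w := g' y - g' x with hw
    set b := y - (1 / C) • w with hb
    have h1 := hlow x b
    have h2 := hup y b
    have hby : b - y = -((1 / C) • w) := by rw [hb]; abel
    have e1 : ⟪g' y, b - y⟫_ℝ = -(1 / C) * ⟪g' y, w⟫_ℝ := by
      rw [hby, inner_neg_right, real_inner_smul_right]; ring
    have e2 : ‖b - y‖ ^ 2 = (1 / C) ^ 2 * ‖w‖ ^ 2 := by
      rw [hby, norm_neg, norm_smul]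
      rw [Real.norm_eq_abs, abs_of_pos (by positivity : (0:ℝ) < 1 / C)]
      ring
    have e3 : ⟪g' x, b - x⟫_ℝ = ⟪g' x, y - x⟫_ℝ - (1 / C) * ⟪g' x, w⟫_ℝ := by
      have : b - x = (y - x) - (1 / C) • w := by rw [hb]; abel
      rw [this, inner_sub_right, real_inner_smul_right]
    have e4 : ⟪g' y, w⟫_ℝ - ⟪g' x, w⟫_ℝ = ‖w‖ ^ 2 := by
      rw [← inner_sub_left, ← hw, real_inner_self_eq_norm_sq]
    have e5 : ⟪g' x, y - x⟫_ℝ = ⟪g' x, y⟫_ℝ - ⟪g' x, x⟫_ℝ := by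
      rw [inner_sub_right]
    rw [e1, e2] at h2
    rw [e3, e5] at h1
    have hC2 : C / 2 * ((1 / C) ^ 2 * ‖w‖ ^ 2) = 1 / (2 * C) * ‖w‖ ^ 2 := by
      field_simp
    have hC3 : (1 / C) * ⟪g' y, w⟫_ℝ - (1 / C) * ⟪g' x, w⟫_ℝ = (1 / C) * ‖w‖ ^ 2 := by
      rw [← mul_sub, e4]
    have hC4 : (1 / C) * ‖w‖ ^ 2 - 1 / (2 * C) * ‖w‖ ^ 2 = 1 / (2 * C) * ‖w‖ ^ 2 := by
      field_simp; ring
    linarith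
  have k1 := key x y
  have k2 := key y x
  have e1 : ‖g' x - g' y‖ = ‖g' y - g' x‖ := norm_sub_rev _ _
  have e2 : ⟪g' x - g' y, x - y⟫_ℝ =
      (⟪g' x, x⟫_ℝ - ⟪g' x, y⟫_ℝ) - (⟪g' y, x⟫_ℝ - ⟪g' y, y⟫_ℝ) := by
    rw [inner_sub_left, inner_sub_right, inner_sub_right]
  have e3 : (1 / C) * ‖g' x - g' y‖ ^ 2 =
      1 / (2 * C) * ‖g' y - g' x‖ ^ 2 + 1 / (2 * C) * ‖g' x - g' y‖ ^ 2 := by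
    rw [e1]; field_simp; ring
  rw [e2, e3, e1]
  rw [e1] at k2
  linarith

/-- Coercivity inequality for strongly convex functions with Lipschitz gradient. -/
theorem stmt_0 {n : ℕ} (μ L : ℝ) (hμ : 0 < μ) (hL : 0 < L)
    (f : EuclideanSpace ℝ (Fin n) → ℝ)
    (f' : EuclideanSpace ℝ (Fin n) → EuclideanSpace ℝ (Fin n))
    (hdiff : ∀ x, HasGradientAt f (f' x) x)
    (hsc : ∀ x y, f y ≥ f x + ⟪f' x, y - x⟫_ℝ + μ / 2 * ‖y - x‖ ^ 2)
    (hlip : ∀ x y, ‖f' x - f' y‖ ≤ L * ‖x - y‖) :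
    ∀ x y, ⟪f' x - f' y, x - y⟫_ℝ ≥
      (1 / (L + μ)) * ‖f' x - f' y‖ ^ 2 + (L * μ / (L + μ)) * ‖x - y‖ ^ 2 := by
  intro x y
  by_cases hxy : x = y
  · subst hxy; simp
  set d := f' x - f' y with hd_def
  set s := x - y with hs_def
  set D := ⟪d, s⟫_ℝ with hD_def
  -- strong monotonicity
  have hmono : μ * ‖s‖ ^ 2 ≤ D := by
    have h1 := hsc x y
    have h2 := hsc y x
    have e1 : ⟪f' x, y - x⟫_ℝ = -⟪f' x, s⟫_ℝ := by
      rw [hs_def, ← neg_sub x y, inner_neg_right]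
    have e2 : ‖y - x‖ = ‖s‖ := by rw [hs_def, norm_sub_rev]
    have e3 : D = ⟪f' x, s⟫_ℝ - ⟪f' y, s⟫_ℝ := by
      rw [hD_def, hd_def, inner_sub_left]
    rw [e1, e2] at h1
    linarith
  have hsnz : (0:ℝ) < ‖s‖ := by
    rw [hs_def, norm_pos_iff]; exact sub_ne_zero_of_ne hxy
  have hCS : D ≤ ‖d‖ * ‖s‖ := real_inner_le_norm d s
  have hdL : ‖d‖ ≤ L * ‖s‖ := hlip x y
  have hμL : μ ≤ L := by
    have h1 : D ≤ L * ‖s‖ * ‖s‖ :=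
      hCS.trans (mul_le_mul_of_nonneg_right hdL (norm_nonneg s))
    nlinarith [pow_pos hsnz 2]
  rcases eq_or_lt_of_le hμL with heq | hlt
  · -- case μ = L
    subst heq
    have hdμ : ‖d‖ ≤ μ * ‖s‖ := hdL
    have hD1 : D ≤ μ * ‖s‖ ^ 2 := by nlinarith
    have hDeq : D = μ * ‖s‖ ^ 2 := le_antisymm hD1 hmono
    have hnd : ‖d‖ = μ * ‖s‖ := by
      have h1 : μ * ‖s‖ * ‖s‖ ≤ ‖d‖ * ‖s‖ := by nlinarith
      have h2 : μ * ‖s‖ ≤ ‖d‖ := le_of_mul_le_mul_right h1 hsnz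
      linarith
    have hd2 : ‖d‖ ^ 2 = μ ^ 2 * ‖s‖ ^ 2 := by rw [hnd]; ring
    rw [ge_iff_le, hDeq, hd2]
    have hne : μ + μ ≠ 0 := by positivity
    have heq2 : 1 / (μ + μ) * (μ ^ 2 * ‖s‖ ^ 2) + μ * μ / (μ + μ) * ‖s‖ ^ 2
        = μ * ‖s‖ ^ 2 := by field_simp
    rw [heq2]
  · -- case μ < L
    set C := L - μ with hC_def
    have hC : 0 < C := by rw [hC_def]; linarith
    set g : EuclideanSpace ℝ (Fin n) → ℝ := fun a => f a - μ / 2 * ‖a‖ ^ 2 with hg_def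
    set g' : EuclideanSpace ℝ (Fin n) → EuclideanSpace ℝ (Fin n) :=
      fun a => f' a - μ • a with hg'_def
    have hnormid : ∀ a b : EuclideanSpace ℝ (Fin n),
        ‖b‖ ^ 2 = ‖a‖ ^ 2 + 2 * ⟪a, b - a⟫_ℝ + ‖b - a‖ ^ 2 := by
      intro a b
      have := norm_add_sq_real a (b - a)
      rw [add_sub_cancel] at this
      exact this
    have hginner : ∀ a b : EuclideanSpace ℝ (Fin n),
        ⟪g' a, b - a⟫_ℝ = ⟪f' a, b - a⟫_ℝ - μ * ⟪a, b - a⟫_ℝ := by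
      intro a b
      rw [hg'_def]
      simp only [inner_sub_left, real_inner_smul_left]
    have hlow : ∀ a b, g a + ⟪g' a, b - a⟫_ℝ ≤ g b := by
      intro a b
      have h1 := hsc a b
      have h2 := hnormid a b
      have h3 := hginner a b
      have h4 : μ / 2 * ‖b‖ ^ 2 = μ / 2 * ‖a‖ ^ 2 + μ * ⟪a, b - a⟫_ℝ
          + μ / 2 * ‖b - a‖ ^ 2 := by rw [h2]; ring
      simp only [hg_def]
      linarith
    have hup : ∀ a b, g b ≤ g a + ⟪g' a, b - a⟫_ℝ + C / 2 * ‖b - a‖ ^ 2 := by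
      intro a b
      have h1 := descent (le_of_lt hL) hdiff hlip a b
      have h2 := hnormid a b
      have h3 := hginner a b
      have h4 : μ / 2 * ‖b‖ ^ 2 = μ / 2 * ‖a‖ ^ 2 + μ * ⟪a, b - a⟫_ℝ
          + μ / 2 * ‖b - a‖ ^ 2 := by rw [h2]; ring
      simp only [hg_def, hC_def]
      linarith
    have hc := cocoercive hC hlow hup x y
    have hgd : g' x - g' y = d - μ • s := by
      simp only [hg'_def, hd_def, hs_def, smul_sub]
      abel
    rw [hgd] at hc
    have e1 : ⟪d - μ • s, s⟫_ℝ = D - μ * ‖s‖ ^ 2 := by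
      rw [inner_sub_left, real_inner_smul_left, real_inner_self_eq_norm_sq, hD_def]
    have e2 : ‖d - μ • s‖ ^ 2 = ‖d‖ ^ 2 - 2 * μ * D + μ ^ 2 * ‖s‖ ^ 2 := by
      rw [norm_sub_sq_real, real_inner_smul_right, norm_smul, Real.norm_eq_abs]
      rw [mul_pow, sq_abs, hD_def]
      ring
    have e3 : ⟪d - μ • s, x - y⟫_ℝ = D - μ * ‖s‖ ^ 2 := by rw [← hs_def]; exact e1
    rw [e2, e3] at hc
    rw [one_div, inv_mul_le_iff₀ hC] at hc
    have hLμ : (0:ℝ) < L + μ := by linarith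
    rw [ge_iff_le]
    rw [show (1 / (L + μ)) * ‖d‖ ^ 2 + (L * μ / (L + μ)) * ‖s‖ ^ 2
        = (‖d‖ ^ 2 + L * μ * ‖s‖ ^ 2) / (L + μ) by field_simp]
    rw [div_le_iff₀ hLμ]
    nlinarith [hc]
end

section
/- One step of the proximal gradient method with step-size α > 0 satisfies ‖x⁺ − x*‖ ≤ Q(α)‖x − x*‖, where x⁺ = prox_{αg}(x − α∇f(x)), x* is the minimizer of f + g, and Q(α) = max{|1 − αL|, |1 − αμ|}. -/
open InnerProductSpace

lemma aux_sq_le {a b : ℝ} (ha : 0 ≤ a) (hb : 0 ≤ b) (h : a^2 ≤ b^2) : a ≤ b := by nlinarith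

lemma aux_limit {A B C : ℝ} (hC : 0 ≤ C) (h : ∀ t : ℝ, 0 < t → t ≤ 1 → A ≤ B + t * C) : A ≤ B := by
  refine le_of_forall_pos_le_add fun ε hε => ?_
  have hCpos : 0 < C + 1 := by linarith
  set t := min 1 (ε / (C + 1)) with htdef
  have ht0 : 0 < t := lt_min one_pos (div_pos hε hCpos)
  have ht1 : t ≤ 1 := min_le_left _ _
  have h2 := h t ht0 ht1
  have h3 : t * C ≤ ε := by
    have h4 : t ≤ ε / (C + 1) := min_le_right _ _
    have h5 : t * C ≤ (ε / (C + 1)) * C := mul_le_mul_of_nonneg_right h4 hC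
    have h6 : (ε / (C + 1)) * C ≤ ε := by
      rw [div_mul_eq_mul_div, div_le_iff₀ hCpos]
      nlinarith
    linarith
  linarith

lemma descent_aux {n : ℕ} (L : ℝ)
    (f : EuclideanSpace ℝ (Fin n) → ℝ) (f' : EuclideanSpace ℝ (Fin n) → EuclideanSpace ℝ (Fin n))
    (hdiff : ∀ x, HasGradientAt f (f' x) x)
    (hlip : ∀ x y, ‖f' x - f' y‖ ≤ L * ‖x - y‖)
    (x y : EuclideanSpace ℝ (Fin n)) :
    f y ≤ f x + ⟪f' x, y - x⟫_ℝ + L / 2 * ‖y - x‖ ^ 2 := by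
  set v := y - x with hv
  have hc : ∀ t : ℝ, HasDerivAt (fun t : ℝ => x + t • v) v t := fun t => by
    simpa using ((hasDerivAt_id t).smul_const v).const_add x
  have hφ : ∀ t : ℝ, HasDerivAt (fun t : ℝ => f (x + t • v)) ⟪f' (x + t • v), v⟫_ℝ t := by
    intro t
    have h1 := ((hdiff (x + t • v)).hasFDerivAt).comp_hasDerivAt t (hc t)
    have h2 : HasDerivAt (f ∘ fun t : ℝ => x + t • v) ⟪f' (x + t • v), v⟫_ℝ t := by simpa using h1
    exact h2
  set ψ : ℝ → ℝ := fun t => f (x + t • v) - t * ⟪f' x, v⟫_ℝ - t ^ 2 * (L / 2 * ‖v‖ ^ 2) with hψdef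
  have hψd : ∀ t : ℝ, HasDerivAt ψ
      (⟪f' (x + t • v), v⟫_ℝ - ⟪f' x, v⟫_ℝ - (2 * t ^ 1) * (L / 2 * ‖v‖ ^ 2)) t := by
    intro t
    exact ((hφ t).sub ((hasDerivAt_id t).mul_const _)).sub
      ((hasDerivAt_pow 2 t).mul_const _) |>.congr_deriv (by push_cast; ring)
  have anti : AntitoneOn ψ (Set.Icc (0:ℝ) 1) := by
    apply antitoneOn_of_deriv_nonpos (convex_Icc 0 1)
    · exact fun t _ => (hψd t).continuousAt.continuousWithinAt
    · intro t _
      exact (hψd t).differentiableAt.differentiableWithinAt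
    · intro t ht
      rw [interior_Icc] at ht
      rw [(hψd t).deriv]
      have h1 : ⟪f' (x + t • v) - f' x, v⟫_ℝ ≤ L * t * ‖v‖ ^ 2 := by
        calc ⟪f' (x + t • v) - f' x, v⟫_ℝ ≤ ‖f' (x + t • v) - f' x‖ * ‖v‖ :=
              real_inner_le_norm _ _
          _ ≤ (L * ‖(x + t • v) - x‖) * ‖v‖ :=
              mul_le_mul_of_nonneg_right (hlip _ _) (norm_nonneg _)
          _ = L * t * ‖v‖ ^ 2 := by
              rw [add_sub_cancel_left, norm_smul, Real.norm_eq_abs, abs_of_pos ht.1]; ring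
      have h2 : ⟪f' (x + t • v), v⟫_ℝ - ⟪f' x, v⟫_ℝ = ⟪f' (x + t • v) - f' x, v⟫_ℝ :=
        (inner_sub_left _ _ _).symm
      rw [h2]
      nlinarith [h1]
  have h01 := anti (Set.left_mem_Icc.2 zero_le_one) (Set.right_mem_Icc.2 zero_le_one) zero_le_one
  have e1 : x + (1:ℝ) • v = y := by rw [one_smul, hv]; abel
  have e0 : x + (0:ℝ) • v = x := by rw [zero_smul, add_zero]
  have h01' : f (x + (1:ℝ) • v) - 1 * ⟪f' x, v⟫_ℝ - 1 ^ 2 * (L / 2 * ‖v‖ ^ 2) ≤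
      f (x + (0:ℝ) • v) - 0 * ⟪f' x, v⟫_ℝ - 0 ^ 2 * (L / 2 * ‖v‖ ^ 2) := h01
  rw [e1, e0] at h01'
  linarith

lemma interp_aux {n : ℕ} (μ L : ℝ) (hμ : 0 < μ) (hμL : μ ≤ L)
    (f : EuclideanSpace ℝ (Fin n) → ℝ) (f' : EuclideanSpace ℝ (Fin n) → EuclideanSpace ℝ (Fin n))
    (hdiff : ∀ x, HasGradientAt f (f' x) x)
    (hsc : ∀ x y, f y ≥ f x + ⟪f' x, y - x⟫_ℝ + μ / 2 * ‖y - x‖ ^ 2)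
    (hlip : ∀ x y, ‖f' x - f' y‖ ≤ L * ‖x - y‖)
    (x y : EuclideanSpace ℝ (Fin n)) :
    ‖f' x - f' y‖ ^ 2 + μ * L * ‖x - y‖ ^ 2 ≤ (L + μ) * ⟪f' x - f' y, x - y⟫_ℝ := by
  -- algebra helper
  have inner_expand : ∀ a b : EuclideanSpace ℝ (Fin n),
      ‖b - a‖ ^ 2 = ‖b‖ ^ 2 - 2 * ⟪a, b - a⟫_ℝ - ‖a‖ ^ 2 := by
    intro a b
    have h1 : ⟪a, b - a⟫_ℝ = ⟪a, b⟫_ℝ - ⟪a, a⟫_ℝ := inner_sub_right _ _ _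
    have h2 : ‖b - a‖ ^ 2 = ‖b‖ ^ 2 - 2 * ⟪b, a⟫_ℝ + ‖a‖ ^ 2 := norm_sub_sq_real _ _
    have h3 : ⟪a, a⟫_ℝ = ‖a‖ ^ 2 := real_inner_self_eq_norm_sq a
    have h4 : ⟪a, b⟫_ℝ = ⟪b, a⟫_ℝ := real_inner_comm _ _
    linarith
  -- convexity of h = f - μ/2 ‖·‖²
  have hcx : ∀ a b : EuclideanSpace ℝ (Fin n),
      f a - μ/2 * ‖a‖^2 + ⟪f' a - μ • a, b - a⟫_ℝ ≤ f b - μ/2 * ‖b‖^2 := by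
    intro a b
    have h1 := hsc a b
    have e1 : ⟪f' a - μ • a, b - a⟫_ℝ = ⟪f' a, b - a⟫_ℝ - μ * ⟪a, b - a⟫_ℝ := by
      rw [inner_sub_left, real_inner_smul_left]
    have e2 := inner_expand a b
    nlinarith [h1, e1, e2]
  -- descent for h
  have hdesc : ∀ a b : EuclideanSpace ℝ (Fin n),
      f b - μ/2 * ‖b‖^2 ≤ f a - μ/2 * ‖a‖^2 + ⟪f' a - μ • a, b - a⟫_ℝ
        + (L - μ)/2 * ‖b - a‖^2 := by
    intro a b
    have h1 := descent_aux L f f' hdiff hlip a b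
    have e1 : ⟪f' a - μ • a, b - a⟫_ℝ = ⟪f' a, b - a⟫_ℝ - μ * ⟪a, b - a⟫_ℝ := by
      rw [inner_sub_left, real_inner_smul_left]
    have e2 := inner_expand a b
    nlinarith [h1, e1, e2]
  set w : EuclideanSpace ℝ (Fin n) := f' x - f' y with hw
  set v : EuclideanSpace ℝ (Fin n) := x - y with hv
  set e : EuclideanSpace ℝ (Fin n) := (f' x - μ • x) - (f' y - μ • y) with he
  have hee : e = w - μ • v := by rw [he, hw, hv, smul_sub]; abel
  have key : ∀ s : ℝ, 2 * s * ‖e‖^2 - (L - μ) * s^2 * ‖e‖^2 ≤ ⟪e, x - y⟫_ℝ := by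
    intro s
    have A := hcx x (y + s • e)
    have B := hdesc y (y + s • e)
    have A' := hcx y (x + s • (-e))
    have B' := hdesc x (x + s • (-e))
    have ez1 : (y + s • e) - x = (y - x) + s • e := by abel
    have ez2 : (y + s • e) - y = s • e := by abel
    have ez3 : (x + s • (-e)) - y = (x - y) + s • (-e) := by abel
    have ez4 : (x + s • (-e)) - x = s • (-e) := by abel
    rw [ez1] at A; rw [ez2] at B; rw [ez3] at A'; rw [ez4] at B'
    have i1 : ⟪f' x - μ • x, (y - x) + s • e⟫_ℝ
        = ⟪f' x - μ • x, y - x⟫_ℝ + s * ⟪f' x - μ • x, e⟫_ℝ := by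
      rw [inner_add_right, real_inner_smul_right]
    have i2 : ⟪f' y - μ • y, s • e⟫_ℝ = s * ⟪f' y - μ • y, e⟫_ℝ := real_inner_smul_right _ _ _
    have i3 : ⟪f' y - μ • y, (x - y) + s • (-e)⟫_ℝ
        = ⟪f' y - μ • y, x - y⟫_ℝ - s * ⟪f' y - μ • y, e⟫_ℝ := by
      rw [inner_add_right, real_inner_smul_right, inner_neg_right]; ring
    have i4 : ⟪f' x - μ • x, s • (-e)⟫_ℝ = -(s * ⟪f' x - μ • x, e⟫_ℝ) := by
      rw [real_inner_smul_right, inner_neg_right]; ring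
    have n1 : ‖s • e‖^2 = s^2 * ‖e‖^2 := by
      rw [norm_smul, mul_pow, Real.norm_eq_abs, sq_abs]
    have n2 : ‖s • (-e)‖^2 = s^2 * ‖e‖^2 := by
      rw [norm_smul, mul_pow, Real.norm_eq_abs, sq_abs, norm_neg]
    have isum : ⟪f' x - μ • x, e⟫_ℝ - ⟪f' y - μ • y, e⟫_ℝ = ‖e‖^2 := by
      rw [← inner_sub_left, ← he, real_inner_self_eq_norm_sq]
    have iv : ⟪f' x - μ • x, y - x⟫_ℝ + ⟪f' y - μ • y, x - y⟫_ℝ = -⟪e, x - y⟫_ℝ := by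
      have h5 : ⟪e, x - y⟫_ℝ = ⟪f' x - μ • x, x - y⟫_ℝ - ⟪f' y - μ • y, x - y⟫_ℝ := by
        rw [he, inner_sub_left]
      have h6 : ⟪f' x - μ • x, y - x⟫_ℝ = -⟪f' x - μ • x, x - y⟫_ℝ := by
        rw [show y - x = -(x - y) by abel, inner_neg_right]
      linarith
    have isum2 : s * ⟪f' x - μ • x, e⟫_ℝ - s * ⟪f' y - μ • y, e⟫_ℝ = s * ‖e‖^2 := by
      rw [← mul_sub, isum]
    rw [n1] at B
    rw [n2] at B'
    have mm : (L - μ)/2 * (s^2 * ‖e‖^2) + (L - μ)/2 * (s^2 * ‖e‖^2)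
        = (L - μ) * s^2 * ‖e‖^2 := by ring
    linarith [A, B, A', B', i1, i2, i3, i4, isum2, iv, mm]
  have hco : ‖e‖^2 ≤ (L - μ) * ⟪e, x - y⟫_ℝ := by
    rcases lt_or_eq_of_le hμL with hlt | heq
    · have hc : 0 < L - μ := by linarith
      have h := key (1 / (L - μ))
      have h2 := mul_le_mul_of_nonneg_left h (le_of_lt hc)
      have e3 : (L - μ) * (2 * (1 / (L - μ)) * ‖e‖ ^ 2 - (L - μ) * (1 / (L - μ)) ^ 2 * ‖e‖ ^ 2)
          = ‖e‖ ^ 2 := by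
        field_simp
        ring
      linarith [h2, e3]
    · have hc : L - μ = 0 := by rw [← heq]; ring
      have hE : ‖e‖^2 ≤ 0 := by
        by_contra hE'
        push_neg at hE'
        have h := key ((⟪e, x - y⟫_ℝ + 1) / (2 * ‖e‖^2))
        rw [hc] at h
        have hne : (2 * ‖e‖^2) ≠ 0 := by positivity
        have : (⟪e, x - y⟫_ℝ + 1) / (2 * ‖e‖^2) * (2 * ‖e‖^2) = ⟪e, x - y⟫_ℝ + 1 :=
          div_mul_cancel₀ _ hne
        nlinarith [h]
      rw [hc]
      have := sq_nonneg ‖e‖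
      simp only [zero_mul]
      linarith
  -- expand
  have E1 : ‖e‖^2 = ‖w‖^2 - 2 * (μ * ⟪w, v⟫_ℝ) + μ^2 * ‖v‖^2 := by
    rw [hee]
    have h2 : ‖w - μ • v‖ ^ 2 = ‖w‖ ^ 2 - 2 * ⟪w, μ • v⟫_ℝ + ‖μ • v‖ ^ 2 := by
      have := norm_sub_sq_real w (μ • v)
      have hcm : ⟪μ • v, w⟫_ℝ = ⟪w, μ • v⟫_ℝ := real_inner_comm _ _
      linarith
    rw [h2, real_inner_smul_right, norm_smul, mul_pow, Real.norm_eq_abs, sq_abs]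
  have E2 : ⟪e, x - y⟫_ℝ = ⟪w, v⟫_ℝ - μ * ‖v‖^2 := by
    rw [hee, ← hv, inner_sub_left, real_inner_smul_left, real_inner_self_eq_norm_sq]
  rw [E1, E2] at hco
  nlinarith [hco]

set_option maxHeartbeats 1000000 in
/-- One proximal gradient step with step size `α > 0` contracts the distance to the
minimizer `x*` of `f + g` by the factor `Q(α) = max {|1 - αL|, |1 - αμ|}`.  Here
`xplus = prox_{αg}(x - α ∇f(x))` is expressed as the minimizer of the prox subproblem. -/
theorem stmt_5 {n : ℕ} (μ L : ℝ) (hμ : 0 < μ) (hμL : μ ≤ L)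
    (f : EuclideanSpace ℝ (Fin n) → ℝ)
    (f' : EuclideanSpace ℝ (Fin n) → EuclideanSpace ℝ (Fin n))
    (hdiff : ∀ x, HasGradientAt f (f' x) x)
    (hsc : ∀ x y, f y ≥ f x + ⟪f' x, y - x⟫_ℝ + μ / 2 * ‖y - x‖ ^ 2)
    (hlip : ∀ x y, ‖f' x - f' y‖ ≤ L * ‖x - y‖)
    (g : EuclideanSpace ℝ (Fin n) → EReal)
    (hproper : ∃ x, g x ≠ ⊤) (hnotbot : ∀ x, g x ≠ ⊥)
    (hconv : ∀ x y : EuclideanSpace ℝ (Fin n), ∀ t : ℝ, 0 ≤ t → t ≤ 1 →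
      g (t • x + (1 - t) • y) ≤ (t : EReal) * g x + ((1 - t : ℝ) : EReal) * g y)
    (hlsc : LowerSemicontinuous g)
    (xstar : EuclideanSpace ℝ (Fin n))
    (hmin : ∀ y, (f xstar : EReal) + g xstar ≤ (f y : EReal) + g y)
    (α : ℝ) (hα : 0 < α)
    (x xplus : EuclideanSpace ℝ (Fin n))
    (hstep : ∀ y, ((1/2 * ‖xplus - (x - α • f' x)‖^2 : ℝ) : EReal) + (α : EReal) * g xplus ≤
      ((1/2 * ‖y - (x - α • f' x)‖^2 : ℝ) : EReal) + (α : EReal) * g y) :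
    ‖xplus - xstar‖ ≤ max |1 - α * L| |1 - α * μ| * ‖x - xstar‖ := by
  set q : ℝ := max |1 - α * L| |1 - α * μ| with hq
  have hq0 : 0 ≤ q := le_trans (abs_nonneg _) (le_max_left _ _)
  set a : EuclideanSpace ℝ (Fin n) := x - α • f' x with ha
  set b : EuclideanSpace ℝ (Fin n) := xstar - α • f' xstar with hb
  -- finiteness of g at xstar and xplus
  obtain ⟨y₀, hy₀⟩ := hproper
  have hgy₀ : g y₀ = ((g y₀).toReal : EReal) := (EReal.coe_toReal hy₀ (hnotbot y₀)).symm
  have hgsne : g xstar ≠ ⊤ := by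
    intro hT
    have h1 := hmin y₀
    rw [hT, EReal.add_top_of_ne_bot (EReal.coe_ne_bot _), hgy₀, ← EReal.coe_add] at h1
    exact (EReal.coe_ne_top _) (top_le_iff.mp h1)
  have hgs : g xstar = (((g xstar).toReal : ℝ) : EReal) :=
    (EReal.coe_toReal hgsne (hnotbot _)).symm
  set Gs : ℝ := (g xstar).toReal with hGs
  have hgpne : g xplus ≠ ⊤ := by
    intro hT
    have h1 := hstep xstar
    rw [hT, EReal.coe_mul_top_of_pos (by exact_mod_cast hα), EReal.add_top_of_ne_bot
      (EReal.coe_ne_bot _), hgs, ← EReal.coe_mul, ← EReal.coe_add] at h1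
    exact (EReal.coe_ne_top _) (top_le_iff.mp h1)
  have hgp : g xplus = (((g xplus).toReal : ℝ) : EReal) :=
    (EReal.coe_toReal hgpne (hnotbot _)).symm
  set Gp : ℝ := (g xplus).toReal with hGp
  have hL0 : (0:ℝ) ≤ L := by linarith
  -- variational inequality at xstar, evaluated at xplus
  have VIs : Gs ≤ ⟪f' xstar, xplus - xstar⟫_ℝ + Gp := by
    have hC : (0:ℝ) ≤ L * ‖xplus - xstar‖^2 := mul_nonneg hL0 (sq_nonneg _)
    refine aux_limit hC ?_
    intro t ht0 ht1
    set z : EuclideanSpace ℝ (Fin n) := t • xplus + (1 - t) • xstar with hzdef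
    have hz : z = xstar + t • (xplus - xstar) := by rw [hzdef]; module
    have hgz : g z ≤ ((t * Gp + (1 - t) * Gs : ℝ) : EReal) := by
      have h1 := hconv xplus xstar t ht0.le ht1
      rw [hgp, hgs, ← EReal.coe_mul, ← EReal.coe_mul, ← EReal.coe_add] at h1
      exact h1
    have hgzne : g z ≠ ⊤ := ne_top_of_le_ne_top (EReal.coe_ne_top _) hgz
    have hgzr : g z = (((g z).toReal : ℝ) : EReal) := (EReal.coe_toReal hgzne (hnotbot _)).symm
    set Gz : ℝ := (g z).toReal with hGz
    have hGzle : Gz ≤ t * Gp + (1 - t) * Gs := by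
      rw [hgzr] at hgz; exact EReal.coe_le_coe_iff.mp hgz
    have hreal : f xstar + Gs ≤ f z + Gz := by
      have h1 := hmin z
      rw [hgs, hgzr, ← EReal.coe_add, ← EReal.coe_add] at h1
      exact EReal.coe_le_coe_iff.mp h1
    -- upper bound on f z
    set d : EuclideanSpace ℝ (Fin n) := xplus - xstar with hd
    have hfz : f z ≤ f xstar + t * ⟪f' z, d⟫_ℝ := by
      have h1 := hsc z xstar
      have e1 : xstar - z = -(t • d) := by rw [hz]; abel
      have e2 : ⟪f' z, xstar - z⟫_ℝ = -(t * ⟪f' z, d⟫_ℝ) := by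
        rw [e1, inner_neg_right, real_inner_smul_right]
      linarith [h1, e2, mul_nonneg hμ.le (sq_nonneg ‖xstar - z‖)]
    have hfd : ⟪f' z, d⟫_ℝ ≤ ⟪f' xstar, d⟫_ℝ + L * t * ‖d‖^2 := by
      have h1 : ⟪f' z - f' xstar, d⟫_ℝ ≤ ‖f' z - f' xstar‖ * ‖d‖ := real_inner_le_norm _ _
      have h2 : ‖f' z - f' xstar‖ ≤ L * (t * ‖d‖) := by
        have := hlip z xstar
        rwa [show z - xstar = t • d by rw [hz]; abel, norm_smul, Real.norm_eq_abs,
          abs_of_pos ht0] at this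
      have h3 : ⟪f' z - f' xstar, d⟫_ℝ = ⟪f' z, d⟫_ℝ - ⟪f' xstar, d⟫_ℝ := inner_sub_left _ _ _
      nlinarith [norm_nonneg d, h1, h2, h3]
    have hfin : t * Gs ≤ t * ((⟪f' xstar, d⟫_ℝ + Gp) + t * (L * ‖d‖^2)) := by
      linarith [hreal, hfz, hGzle, mul_le_mul_of_nonneg_left hfd ht0.le]
    exact le_of_mul_le_mul_left hfin ht0
  -- variational inequality at xplus, evaluated at xstar
  have VIp : α * Gp ≤ ⟪xplus - a, xstar - xplus⟫_ℝ + α * Gs := by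
    have hC : (0:ℝ) ≤ 1/2 * ‖xstar - xplus‖^2 := by positivity
    refine aux_limit hC ?_
    intro t ht0 ht1
    set z : EuclideanSpace ℝ (Fin n) := t • xstar + (1 - t) • xplus with hzdef
    have hz : z = xplus + t • (xstar - xplus) := by rw [hzdef]; module
    have hgz : g z ≤ ((t * Gs + (1 - t) * Gp : ℝ) : EReal) := by
      have h1 := hconv xstar xplus t ht0.le ht1
      rw [hgp, hgs, ← EReal.coe_mul, ← EReal.coe_mul, ← EReal.coe_add] at h1
      exact h1
    have hgzne : g z ≠ ⊤ := ne_top_of_le_ne_top (EReal.coe_ne_top _) hgz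
    have hgzr : g z = (((g z).toReal : ℝ) : EReal) := (EReal.coe_toReal hgzne (hnotbot _)).symm
    set Gz : ℝ := (g z).toReal with hGz
    have hGzle : Gz ≤ t * Gs + (1 - t) * Gp := by
      rw [hgzr] at hgz; exact EReal.coe_le_coe_iff.mp hgz
    have hreal : 1/2 * ‖xplus - a‖^2 + α * Gp ≤ 1/2 * ‖z - a‖^2 + α * Gz := by
      have h1 := hstep z
      rw [hgp, hgzr, ← EReal.coe_mul, ← EReal.coe_mul, ← EReal.coe_add, ← EReal.coe_add] at h1
      exact EReal.coe_le_coe_iff.mp h1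
    set d : EuclideanSpace ℝ (Fin n) := xstar - xplus with hd
    have hnz : ‖z - a‖^2 = ‖xplus - a‖^2 + 2 * (t * ⟪xplus - a, d⟫_ℝ) + t^2 * ‖d‖^2 := by
      have e1 : z - a = (xplus - a) + t • d := by rw [hz]; abel
      rw [e1]
      have h2 := norm_add_sq_real (xplus - a) (t • d)
      rw [real_inner_smul_right, norm_smul, Real.norm_eq_abs] at h2
      rw [h2]; rw [mul_pow, sq_abs]
    have hfin : t * (α * Gp) ≤ t * ((⟪xplus - a, d⟫_ℝ + α * Gs) + t * (1/2 * ‖d‖^2)) := by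
      linarith [hreal, hnz, mul_le_mul_of_nonneg_left hGzle hα.le]
    exact le_of_mul_le_mul_left hfin ht0
  -- combine the two VIs
  set p : EuclideanSpace ℝ (Fin n) := xplus - xstar with hp
  have hcomb : ‖p‖^2 ≤ ⟪a - b, p⟫_ℝ := by
    have h1 : α * Gs ≤ α * (⟪f' xstar, p⟫_ℝ + Gp) := mul_le_mul_of_nonneg_left VIs hα.le
    have h2 : α * ⟪f' xstar, p⟫_ℝ = ⟪xstar - b, p⟫_ℝ := by
      rw [show xstar - b = α • f' xstar by rw [hb]; abel, real_inner_smul_left]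
    have h3 : ⟪xplus - a, xstar - xplus⟫_ℝ = -⟪xplus - a, p⟫_ℝ := by
      rw [show xstar - xplus = -p by rw [hp]; abel, inner_neg_right]
    have h4 : ⟪a - b, p⟫_ℝ - ‖p‖^2 = ⟪xstar - b, p⟫_ℝ - ⟪xplus - a, p⟫_ℝ := by
      rw [← inner_sub_left, ← real_inner_self_eq_norm_sq p, ← inner_sub_left]
      congr 1
      rw [hp]
      abel
    rw [h3] at VIp
    linarith [VIp, h1, h2, h4]
  -- bound ‖a - b‖
  set v : EuclideanSpace ℝ (Fin n) := x - xstar with hv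
  set w : EuclideanSpace ℝ (Fin n) := f' x - f' xstar with hw
  have hab : a - b = v - α • w := by rw [ha, hb, hv, hw, smul_sub]; abel
  have hM : μ * ‖v‖^2 ≤ ⟪w, v⟫_ℝ := by
    have h1 := hsc x xstar
    have h2 := hsc xstar x
    have e1 : ⟪f' x, xstar - x⟫_ℝ = -⟪f' x, v⟫_ℝ := by
      rw [show xstar - x = -v by rw [hv]; abel, inner_neg_right]
    have e2 : ‖xstar - x‖ = ‖v‖ := by rw [hv, norm_sub_rev]
    have e3 : ⟪w, v⟫_ℝ = ⟪f' x, v⟫_ℝ - ⟪f' xstar, v⟫_ℝ := inner_sub_left _ _ _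
    have e2' : ‖xstar - x‖^2 = ‖v‖^2 := by rw [e2]
    have e4 : ⟪f' xstar, x - xstar⟫_ℝ = ⟪f' xstar, v⟫_ℝ := by rw [hv]
    have e5 : ‖x - xstar‖^2 = ‖v‖^2 := by rw [hv]
    have e2'' : μ/2 * ‖xstar - x‖^2 = μ/2 * ‖v‖^2 := by rw [e2']
    have e5' : μ/2 * ‖x - xstar‖^2 = μ/2 * ‖v‖^2 := by rw [e5]
    linarith [h1, h2, e1, e3, e4, e2'', e5']
  have hLip2 : ‖w‖^2 ≤ L^2 * ‖v‖^2 := by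
    have h1 := hlip x xstar
    nlinarith [norm_nonneg w, norm_nonneg v, h1]
  have hμw : μ^2 * ‖v‖^2 ≤ ‖w‖^2 := by
    by_cases h0 : ‖v‖ = 0
    · rw [h0]; simp
    · have hvpos : 0 < ‖v‖ := lt_of_le_of_ne (norm_nonneg v) (Ne.symm h0)
      have h1 : μ * ‖v‖ * ‖v‖ ≤ ‖w‖ * ‖v‖ := by
        have := hM.trans (real_inner_le_norm w v)
        nlinarith
      have h2 : μ * ‖v‖ ≤ ‖w‖ := le_of_mul_le_mul_right h1 hvpos
      nlinarith
  have hI := interp_aux μ L hμ hμL f f' hdiff hsc hlip x xstar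
  rw [← hv, ← hw] at hI
  have hS : (0:ℝ) < L + μ := by linarith
  have hexp : ‖v - α • w‖^2 = ‖v‖^2 - 2 * (α * ⟪w, v⟫_ℝ) + α^2 * ‖w‖^2 := by
    have h1 := norm_sub_sq_real v (α • w)
    rw [real_inner_smul_right, norm_smul, Real.norm_eq_abs, real_inner_comm] at h1
    rw [h1, mul_pow, sq_abs]
  have habq : ‖v - α • w‖ ≤ q * ‖v‖ := by
    rcases le_or_gt (α * (L + μ)) 2 with hcase | hcase
    · have hαμ : 0 ≤ 1 - α * μ := by nlinarith
      have hmain : (L + μ) * ‖v - α • w‖^2 ≤ (L + μ) * ((1 - α * μ)^2 * ‖v‖^2) := by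
        rw [hexp]
        nlinarith [mul_le_mul_of_nonneg_left hI (by positivity : (0:ℝ) ≤ 2 * α),
          mul_nonneg (mul_nonneg hα.le (by linarith : (0:ℝ) ≤ 2 - α * (L + μ)))
            (sub_nonneg.2 hμw)]
      have h2 : ‖v - α • w‖^2 ≤ ((1 - α * μ) * ‖v‖)^2 := by
        have := le_of_mul_le_mul_left hmain hS
        nlinarith
      have h3 : ‖v - α • w‖ ≤ (1 - α * μ) * ‖v‖ :=
        aux_sq_le (norm_nonneg _) (by positivity) h2
      have h4 : 1 - α * μ ≤ q := le_trans (le_abs_self _) (le_max_right _ _)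
      calc ‖v - α • w‖ ≤ (1 - α * μ) * ‖v‖ := h3
        _ ≤ q * ‖v‖ := mul_le_mul_of_nonneg_right h4 (norm_nonneg _)
    · have hmain : (L + μ) * ‖v - α • w‖^2 ≤ (L + μ) * ((1 - α * L)^2 * ‖v‖^2) := by
        rw [hexp]
        nlinarith [mul_le_mul_of_nonneg_left hI (by positivity : (0:ℝ) ≤ 2 * α),
          mul_nonneg (mul_nonneg hα.le (by linarith : (0:ℝ) ≤ α * (L + μ) - 2))
            (sub_nonneg.2 hLip2)]
      have h2 : ‖v - α • w‖^2 ≤ (|1 - α * L| * ‖v‖)^2 := by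
        have := le_of_mul_le_mul_left hmain hS
        rw [mul_pow, sq_abs]
        nlinarith
      have h3 : ‖v - α • w‖ ≤ |1 - α * L| * ‖v‖ :=
        aux_sq_le (norm_nonneg _) (by positivity) h2
      calc ‖v - α • w‖ ≤ |1 - α * L| * ‖v‖ := h3
        _ ≤ q * ‖v‖ := mul_le_mul_of_nonneg_right (le_max_left _ _) (norm_nonneg _)
  -- finish
  have hfinal : ‖p‖ * ‖p‖ ≤ (q * ‖v‖) * ‖p‖ := by
    have h1 : ⟪a - b, p⟫_ℝ ≤ ‖a - b‖ * ‖p‖ := real_inner_le_norm _ _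
    have h2 : ‖a - b‖ ≤ q * ‖v‖ := by rw [hab]; exact habq
    have h3 := mul_le_mul_of_nonneg_right h2 (norm_nonneg p)
    have h4 : ‖p‖^2 = ‖p‖ * ‖p‖ := pow_two ‖p‖
    linarith [hcomb, h1, h3, h4]
  rcases eq_or_lt_of_le (norm_nonneg p) with h0 | h0
  · rw [← h0]
    exact mul_nonneg hq0 (norm_nonneg _)
  · exact le_of_mul_le_mul_right hfinal h0
end

section
/- For every iteration k ≥ 1 of the proximal gradient method x^{k+1} = prox_{αg}(x^k − α∇f(x^k)) with constant step-size α > 0, we have ‖x^k − x*‖ ≤ Q(α)^k ‖x⁰ − x*‖, where Q(α) = max{|1 − αL|, |1 − αμ|}. -/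
set_option maxHeartbeats 1000000


open InnerProductSpace

section Helpers

variable {E : Type*} [NormedAddCommGroup E] [InnerProductSpace ℝ E] [CompleteSpace E]

private lemma pgd_chainrule {f : E → ℝ} {f' : E → E} (hdiff : ∀ x, HasGradientAt f (f' x) x)
    (x d : E) (t : ℝ) :
    HasDerivAt (fun s : ℝ => f (x + s • d)) ⟪f' (x + t • d), d⟫_ℝ t := by
  have h1 : HasFDerivAt f (toDual ℝ E (f' (x + t • d))) (x + t • d) :=
    hasGradientAt_iff_hasFDerivAt.1 (hdiff _)
  have h2 : HasDerivAt (fun s : ℝ => x + s • d) d t := by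
    simpa using ((hasDerivAt_id t).smul_const d).const_add x
  have h3 := h1.comp_hasDerivAt t h2
  simp only [toDual_apply_apply] at h3
  exact h3

private lemma pgd_descent {f : E → ℝ} {f' : E → E} {K : ℝ}
    (hdiff : ∀ x, HasGradientAt f (f' x) x)
    (hlip : ∀ x y, ‖f' x - f' y‖ ≤ K * ‖x - y‖) (x y : E) :
    f y ≤ f x + ⟪f' x, y - x⟫_ℝ + K / 2 * ‖y - x‖ ^ 2 := by
  set d := y - x with hd
  set φ : ℝ → ℝ := fun t => f (x + t • d) - t * ⟪f' x, d⟫_ℝ - K / 2 * t ^ 2 * ‖d‖ ^ 2 with hφ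
  have hder : ∀ t : ℝ, HasDerivAt φ
      (⟪f' (x + t • d), d⟫_ℝ - ⟪f' x, d⟫_ℝ - K * t * ‖d‖ ^ 2) t := by
    intro t
    have h1 := pgd_chainrule hdiff x d t
    have h2 : HasDerivAt (fun t : ℝ => t * ⟪f' x, d⟫_ℝ) ⟪f' x, d⟫_ℝ t := by
      simpa using (hasDerivAt_id t).mul_const ⟪f' x, d⟫_ℝ
    have h3 : HasDerivAt (fun t : ℝ => K / 2 * t ^ 2 * ‖d‖ ^ 2) (K * t * ‖d‖ ^ 2) t := by
      have := ((hasDerivAt_pow 2 t).const_mul (K / 2)).mul_const (‖d‖ ^ 2)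
      refine HasDerivAt.congr_deriv this ?_
      ring
    exact (h1.sub h2).sub h3
  have hanti : AntitoneOn φ (Set.Icc 0 1) := by
    apply antitoneOn_of_deriv_nonpos (convex_Icc 0 1)
    · exact fun t _ => ((hder t).differentiableAt).continuousAt.continuousWithinAt
    · intro t ht
      exact ((hder t).differentiableAt).differentiableWithinAt
    · intro t ht
      rw [interior_Icc] at ht
      rw [(hder t).deriv]
      have h4 : ⟪f' (x + t • d) - f' x, d⟫_ℝ ≤ K * t * ‖d‖ ^ 2 := by
        calc ⟪f' (x + t • d) - f' x, d⟫_ℝ ≤ ‖f' (x + t • d) - f' x‖ * ‖d‖ :=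
              real_inner_le_norm _ _
          _ ≤ (K * ‖(x + t • d) - x‖) * ‖d‖ := by
              gcongr; exact hlip _ _
          _ = K * t * ‖d‖ ^ 2 := by
              rw [add_sub_cancel_left, norm_smul, Real.norm_eq_abs,
                abs_of_pos ht.1]
              ring
      have := inner_sub_left (𝕜 := ℝ) (f' (x + t • d)) (f' x) d
      linarith [h4, this.symm]
  have h01 := hanti (Set.left_mem_Icc.2 zero_le_one) (Set.right_mem_Icc.2 zero_le_one) zero_le_one
  simp only [φ, zero_smul, add_zero, one_smul] at h01
  have : x + d = y := by simp [hd]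
  rw [this] at h01
  nlinarith [h01]

private lemma pgd_lemB {f : E → ℝ} {f' : E → E} {K : ℝ} (hK : 0 < K)
    (hcvx : ∀ x y, f x + ⟪f' x, y - x⟫_ℝ ≤ f y)
    (hub : ∀ x y, f y ≤ f x + ⟪f' x, y - x⟫_ℝ + K / 2 * ‖y - x‖ ^ 2) (x y : E) :
    f x + ⟪f' x, y - x⟫_ℝ + 1 / (2 * K) * ‖f' y - f' x‖ ^ 2 ≤ f y := by
  set w := f' y - f' x with hw
  set z := y - (1 / K) • w with hz
  have h1 := hcvx x z
  have h2 := hub y z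
  have e1 : z - x = (y - x) - (1 / K) • w := by rw [hz]; abel
  have e2 : z - y = -((1 / K) • w) := by rw [hz]; abel
  rw [e1, inner_sub_right] at h1
  rw [e2, inner_neg_right, norm_neg, norm_smul, inner_smul_right] at h2
  rw [inner_smul_right] at h1
  have e3 : ⟪f' y, w⟫_ℝ - ⟪f' x, w⟫_ℝ = ‖w‖ ^ 2 := by
    rw [← inner_sub_left, ← hw, real_inner_self_eq_norm_sq]
  have e4 : (‖(1 / K : ℝ)‖ * ‖w‖) ^ 2 = (1 / K) ^ 2 * ‖w‖ ^ 2 := by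
    rw [Real.norm_eq_abs, mul_pow, sq_abs]
  rw [e4] at h2
  have hK' : K ≠ 0 := ne_of_gt hK
  have q1 : K / 2 * ((1 / K) ^ 2 * ‖w‖ ^ 2) = 1 / (2 * K) * ‖w‖ ^ 2 := by
    field_simp
  have q2 : 1 / K * ⟪f' y, w⟫_ℝ - 1 / K * ⟪f' x, w⟫_ℝ = 1 / K * ‖w‖ ^ 2 := by
    rw [← mul_sub, e3]
  have q3 : 1 / K * ‖w‖ ^ 2 - 1 / (2 * K) * ‖w‖ ^ 2 = 1 / (2 * K) * ‖w‖ ^ 2 := by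
    field_simp
    ring
  linarith

private lemma pgd_cocoercive {f : E → ℝ} {f' : E → E} {K : ℝ} (hK : 0 ≤ K)
    (hcvx : ∀ x y, f x + ⟪f' x, y - x⟫_ℝ ≤ f y)
    (hub : ∀ x y, f y ≤ f x + ⟪f' x, y - x⟫_ℝ + K / 2 * ‖y - x‖ ^ 2) (x y : E) :
    ‖f' x - f' y‖ ^ 2 ≤ K * ⟪f' x - f' y, x - y⟫_ℝ := by
  have n1 : ∀ a : E, ⟪a, y - x⟫_ℝ = -⟪a, x - y⟫_ℝ := fun a => by
    rw [show (y - x : E) = -(x - y) by abel, inner_neg_right]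
  have es : ⟪f' x - f' y, x - y⟫_ℝ = ⟪f' x, x - y⟫_ℝ - ⟪f' y, x - y⟫_ℝ :=
    inner_sub_left _ _ _
  have hs : 0 ≤ ⟪f' x - f' y, x - y⟫_ℝ := by
    have h1 := hcvx x y
    have h2 := hcvx y x
    rw [n1 (f' x)] at h1
    linarith [es]
  have key : ∀ ε : ℝ, 0 < ε → ‖f' x - f' y‖ ^ 2 ≤ (K + ε) * ⟪f' x - f' y, x - y⟫_ℝ := by
    intro ε hε
    have hK2 : 0 < K + ε := by linarith
    have hub2 : ∀ a b, f b ≤ f a + ⟪f' a, b - a⟫_ℝ + (K + ε) / 2 * ‖b - a‖ ^ 2 := by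
      intro a b
      have := hub a b
      nlinarith [sq_nonneg ‖b - a‖]
    have h1 := pgd_lemB hK2 hcvx hub2 x y
    have h2 := pgd_lemB hK2 hcvx hub2 y x
    have hnorm : ‖f' y - f' x‖ = ‖f' x - f' y‖ := norm_sub_rev _ _
    rw [hnorm] at h1
    rw [n1 (f' x)] at h1
    have hc : 1 / (2 * (K + ε)) * ‖f' x - f' y‖ ^ 2 + 1 / (2 * (K + ε)) * ‖f' x - f' y‖ ^ 2
        = 1 / (K + ε) * ‖f' x - f' y‖ ^ 2 := by
      field_simp
      ring
    have hfin : 1 / (K + ε) * ‖f' x - f' y‖ ^ 2 ≤ ⟪f' x - f' y, x - y⟫_ℝ := by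
      linarith [es]
    calc ‖f' x - f' y‖ ^ 2 = (K + ε) * (1 / (K + ε) * ‖f' x - f' y‖ ^ 2) := by
          field_simp
      _ ≤ (K + ε) * ⟪f' x - f' y, x - y⟫_ℝ :=
          mul_le_mul_of_nonneg_left hfin (le_of_lt hK2)
  by_contra hcon
  push_neg at hcon
  set s := ⟪f' x - f' y, x - y⟫_ℝ
  set A := ‖f' x - f' y‖ ^ 2
  have hs1 : 0 < s + 1 := by linarith
  set δ := (A - K * s) / (s + 1) with hδ
  have hδpos : 0 < δ := div_pos (by linarith) hs1
  have hδ1 : δ * (s + 1) = A - K * s := by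
    rw [hδ]; field_simp
  have key' := key δ hδpos
  have expand : (K + δ) * s = K * s + δ * s := by ring
  linarith

private lemma pgd_contraction {μ L α : ℝ} (hμ : 0 < μ) (hμL : μ ≤ L) (hα : 0 < α)
    {f : E → ℝ} {f' : E → E}
    (hdiff : ∀ x, HasGradientAt f (f' x) x)
    (hsc : ∀ x y, f y ≥ f x + ⟪f' x, y - x⟫_ℝ + μ / 2 * ‖y - x‖ ^ 2)
    (hlip : ∀ x y, ‖f' x - f' y‖ ≤ L * ‖x - y‖) (x y : E) :
    ‖(x - α • f' x) - (y - α • f' y)‖ ≤ max |1 - α * L| |1 - α * μ| * ‖x - y‖ := by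
  set h : E → ℝ := fun z => f z - μ / 2 * ‖z‖ ^ 2 with hh
  set h' : E → E := fun z => f' z - μ • z with hh'
  have key : ∀ a b : E, ⟪h' a, b - a⟫_ℝ = ⟪f' a, b - a⟫_ℝ + μ / 2 * ‖b - a‖ ^ 2
      + μ / 2 * ‖a‖ ^ 2 - μ / 2 * ‖b‖ ^ 2 := by
    intro a b
    have e1 : ⟪h' a, b - a⟫_ℝ = ⟪f' a, b - a⟫_ℝ - μ * ⟪a, b - a⟫_ℝ := by
      simp [hh', inner_sub_left, real_inner_smul_left]
    have e2 : ⟪a, b - a⟫_ℝ = ⟪a, b⟫_ℝ - ‖a‖ ^ 2 := by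
      rw [inner_sub_right, real_inner_self_eq_norm_sq]
    have e3 : ‖b - a‖ ^ 2 = ‖b‖ ^ 2 - 2 * ⟪b, a⟫_ℝ + ‖a‖ ^ 2 := norm_sub_sq_real b a
    have e4 : ⟪b, a⟫_ℝ = ⟪a, b⟫_ℝ := real_inner_comm _ _
    rw [e1, e2, e3, e4]; ring
  have hcvx_h : ∀ a b : E, h a + ⟪h' a, b - a⟫_ℝ ≤ h b := by
    intro a b
    have := hsc a b
    rw [key a b]
    simp only [hh]
    linarith
  have hub_h : ∀ a b : E, h b ≤ h a + ⟪h' a, b - a⟫_ℝ + (L - μ) / 2 * ‖b - a‖ ^ 2 := by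
    intro a b
    have := pgd_descent hdiff hlip a b
    rw [key a b]
    simp only [hh]
    linarith
  have CC := pgd_cocoercive (by linarith : (0:ℝ) ≤ L - μ) hcvx_h hub_h x y
  set u := x - y with hu
  set w := h' x - h' y with hw
  have hrw : (x - α • f' x) - (y - α • f' y) = (1 - α * μ) • u - α • w := by
    simp only [hw, hh', hu]
    module
  have hnormsq : ‖(1 - α * μ) • u - α • w‖ ^ 2
      = (1 - α * μ) ^ 2 * ‖u‖ ^ 2 - 2 * (1 - α * μ) * α * ⟪w, u⟫_ℝ + α ^ 2 * ‖w‖ ^ 2 := by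
    rw [norm_sub_sq_real, inner_smul_left, inner_smul_right, norm_smul, norm_smul]
    simp only [RCLike.conj_to_real, Real.norm_eq_abs]
    rw [mul_pow, mul_pow, sq_abs, sq_abs, real_inner_comm u w]
    ring
  set a := ‖u‖ ^ 2 with ha
  set b := ‖w‖ ^ 2 with hb
  set s := ⟪w, u⟫_ℝ with hsdef
  have hs : 0 ≤ s := by
    have h1 := hcvx_h x y
    have h2 := hcvx_h y x
    have e1 : ⟪h' x, y - x⟫_ℝ = -⟪h' x, x - y⟫_ℝ := by
      rw [show (y - x : E) = -(x - y) by abel, inner_neg_right]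
    have e2 : s = ⟪h' x, x - y⟫_ℝ - ⟪h' y, x - y⟫_ℝ := inner_sub_left _ _ _
    rw [e1] at h1
    linarith
  have hCS : s ^ 2 ≤ b * a := by
    have := real_inner_mul_inner_self_le w u
    rw [real_inner_self_eq_norm_sq, real_inner_self_eq_norm_sq] at this
    nlinarith [this]
  have ha0 : 0 ≤ a := sq_nonneg _
  have hb0 : 0 ≤ b := sq_nonneg _
  have hbs : b ≤ (L - μ) * s := CC
  set Q := max |1 - α * L| |1 - α * μ| with hQ
  have hQ0 : 0 ≤ Q := le_trans (abs_nonneg _) (le_max_right _ _)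
  have hQμ : (1 - α * μ) ^ 2 ≤ Q ^ 2 := by
    rw [← sq_abs]
    exact pow_le_pow_left₀ (abs_nonneg _) (le_max_right _ _) 2
  have hQL : (1 - α * L) ^ 2 ≤ Q ^ 2 := by
    rw [← sq_abs]
    exact pow_le_pow_left₀ (abs_nonneg _) (le_max_left _ _) 2
  have main : (1 - α * μ) ^ 2 * a - 2 * (1 - α * μ) * α * s + α ^ 2 * b ≤ Q ^ 2 * a := by
    have hab : α ^ 2 * b ≤ α ^ 2 * ((L - μ) * s) :=
      mul_le_mul_of_nonneg_left hbs (sq_nonneg α)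
    have step1 : (1 - α * μ) ^ 2 * a - 2 * (1 - α * μ) * α * s + α ^ 2 * b
        ≤ (1 - α * μ) ^ 2 * a + α * s * (α * (L - μ) - 2 * (1 - α * μ)) := by
      have e : (1 - α * μ) ^ 2 * a + α * s * (α * (L - μ) - 2 * (1 - α * μ))
          = (1 - α * μ) ^ 2 * a - 2 * (1 - α * μ) * α * s + α ^ 2 * ((L - μ) * s) := by ring
      linarith [hab]
    rcases le_or_gt (α * (L - μ)) (2 * (1 - α * μ)) with hcase | hcase
    · have ht : α * s * (α * (L - μ) - 2 * (1 - α * μ)) ≤ 0 :=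
        mul_nonpos_of_nonneg_of_nonpos (mul_nonneg hα.le hs) (by linarith)
      have := mul_le_mul_of_nonneg_right hQμ ha0
      linarith
    · have hsa : s ≤ (L - μ) * a := by
        rcases eq_or_lt_of_le hs with h0 | h0
        · have : 0 ≤ (L - μ) * a := mul_nonneg (by linarith) ha0
          linarith [h0]
        · have hba := mul_le_mul_of_nonneg_right hbs ha0
          have h1 : s * s ≤ ((L - μ) * a) * s := by nlinarith [hCS, hba]
          exact le_of_mul_le_mul_right h1 h0
      have hD : 0 ≤ α * (L - μ) - 2 * (1 - α * μ) := by linarith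
      have h2 : α * s * (α * (L - μ) - 2 * (1 - α * μ))
          ≤ (α * ((L - μ) * a)) * (α * (L - μ) - 2 * (1 - α * μ)) :=
        mul_le_mul_of_nonneg_right (mul_le_mul_of_nonneg_left hsa hα.le) hD
      have e2 : (1 - α * μ) ^ 2 * a + (α * ((L - μ) * a)) * (α * (L - μ) - 2 * (1 - α * μ))
          = (1 - α * L) ^ 2 * a := by ring
      have := mul_le_mul_of_nonneg_right hQL ha0
      linarith
  calc ‖(x - α • f' x) - (y - α • f' y)‖ = ‖(1 - α * μ) • u - α • w‖ := by rw [hrw]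
    _ ≤ Q * ‖u‖ := by
        have hgoal : ‖(1 - α * μ) • u - α • w‖ ^ 2 ≤ (Q * ‖u‖) ^ 2 := by
          rw [hnormsq, mul_pow]
          calc _ ≤ Q ^ 2 * a := main
            _ = Q ^ 2 * ‖u‖ ^ 2 := by rw [ha]
        exact (pow_le_pow_iff_left₀ (norm_nonneg _) (by positivity) two_ne_zero).1 hgoal
    _ = Q * ‖x - y‖ := by rw [hu]

private lemma pgd_aux_nonneg (A B : ℝ) (hB : 0 ≤ B)
    (h : ∀ t : ℝ, 0 < t → t ≤ 1 → -(t * B) ≤ A) : 0 ≤ A := by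
  by_contra hc
  push_neg at hc
  have hB1 : 0 < B + 1 := by linarith
  set t := min 1 (-A / (2 * (B + 1))) with ht
  have ht0 : 0 < t := lt_min one_pos (div_pos (by linarith) (by linarith))
  have ht1 : t ≤ 1 := min_le_left _ _
  have h2 := h t ht0 ht1
  have ht2 : t ≤ -A / (2 * (B + 1)) := min_le_right _ _
  have h3 : t * B ≤ -A / 2 := by
    calc t * B ≤ t * (B + 1) := by nlinarith
      _ ≤ (-A / (2 * (B + 1))) * (B + 1) := mul_le_mul_of_nonneg_right ht2 (by linarith)
      _ = -A / 2 := by field_simp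
  linarith

end Helpers

/-- Linear convergence of the proximal gradient method with constant step size `α > 0`:
`‖x^k - x*‖ ≤ Q(α)^k ‖x⁰ - x*‖` with `Q(α) = max {|1 - αL|, |1 - αμ|}`. -/
theorem stmt_6 {n : ℕ} (μ L : ℝ) (hμ : 0 < μ) (hμL : μ ≤ L)
    (f : EuclideanSpace ℝ (Fin n) → ℝ)
    (f' : EuclideanSpace ℝ (Fin n) → EuclideanSpace ℝ (Fin n))
    (hdiff : ∀ x, HasGradientAt f (f' x) x)
    (hsc : ∀ x y, f y ≥ f x + ⟪f' x, y - x⟫_ℝ + μ / 2 * ‖y - x‖ ^ 2)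
    (hlip : ∀ x y, ‖f' x - f' y‖ ≤ L * ‖x - y‖)
    (g : EuclideanSpace ℝ (Fin n) → EReal)
    (hproper : ∃ x, g x ≠ ⊤) (hnotbot : ∀ x, g x ≠ ⊥)
    (hconv : ∀ x y : EuclideanSpace ℝ (Fin n), ∀ t : ℝ, 0 ≤ t → t ≤ 1 →
      g (t • x + (1 - t) • y) ≤ (t : EReal) * g x + ((1 - t : ℝ) : EReal) * g y)
    (hlsc : LowerSemicontinuous g)
    (xstar : EuclideanSpace ℝ (Fin n))
    (hmin : ∀ y, (f xstar : EReal) + g xstar ≤ (f y : EReal) + g y)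
    (α : ℝ) (hα : 0 < α)
    (x : ℕ → EuclideanSpace ℝ (Fin n))
    (hstep : ∀ k, ∀ y,
      ((1/2 * ‖x (k+1) - (x k - α • f' (x k))‖^2 : ℝ) : EReal) + (α : EReal) * g (x (k+1)) ≤
      ((1/2 * ‖y - (x k - α • f' (x k))‖^2 : ℝ) : EReal) + (α : EReal) * g y) :
    ∀ k : ℕ, 1 ≤ k →
      ‖x k - xstar‖ ≤ (max |1 - α * L| |1 - α * μ|) ^ k * ‖x 0 - xstar‖ := by
  have hL : (0:ℝ) ≤ L := le_trans hμ.le hμL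
  set Q := max |1 - α * L| |1 - α * μ| with hQdef
  have hQ0 : 0 ≤ Q := le_trans (abs_nonneg _) (le_max_right _ _)
  obtain ⟨x0, hx0top⟩ := hproper
  have hgs_top : g xstar ≠ ⊤ := by
    intro htop
    have h1 := hmin x0
    rw [htop, EReal.add_top_of_ne_bot (EReal.coe_ne_bot (f xstar)), top_le_iff] at h1
    have e : g x0 = (((g x0).toReal : ℝ) : EReal) := ((g x0).coe_toReal hx0top (hnotbot x0)).symm
    rw [e, ← EReal.coe_add] at h1
    exact EReal.coe_ne_top _ h1
  set Gs := (g xstar).toReal with hGsdef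
  have hgseq : g xstar = (Gs : EReal) := ((g xstar).coe_toReal hgs_top (hnotbot xstar)).symm
  have hfin : ∀ k, g (x (k+1)) ≠ ⊤ := by
    intro k htop
    have h1 := hstep k xstar
    rw [htop, hgseq,
      EReal.mul_top_of_pos (show (0:EReal) < (α:EReal) from by exact_mod_cast hα),
      EReal.add_top_of_ne_bot (EReal.coe_ne_bot (1/2 * ‖x (k+1) - (x k - α • f' (x k))‖^2 : ℝ)),
      top_le_iff, ← EReal.coe_mul, ← EReal.coe_add] at h1
    exact EReal.coe_ne_top _ h1
  -- subgradient inequality at the minimizer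
  have subgrad : ∀ (u : EuclideanSpace ℝ (Fin n)) (Gu : ℝ), g u = (Gu : EReal) →
      0 ≤ ⟪f' xstar, u - xstar⟫_ℝ + (Gu - Gs) := by
    intro u Gu hgu
    refine pgd_aux_nonneg _ (L / 2 * ‖u - xstar‖ ^ 2)
      (mul_nonneg (by linarith) (sq_nonneg _)) ?_
    intro t ht0 ht1
    have hz := hconv u xstar t ht0.le ht1
    rw [hgu, hgseq, ← EReal.coe_mul, ← EReal.coe_mul, ← EReal.coe_add] at hz
    set z := t • u + (1 - t) • xstar with hzdef
    have h1 := hmin z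
    have hz_top : g z ≠ ⊤ := fun hh => by rw [hh] at hz; exact EReal.coe_ne_top _ (top_le_iff.1 hz)
    have hgz : g z = ((g z).toReal : EReal) := ((g z).coe_toReal hz_top (hnotbot z)).symm
    set Gz := (g z).toReal with hGz
    rw [hgz] at hz h1
    rw [hgseq, ← EReal.coe_add, ← EReal.coe_add] at h1
    rw [EReal.coe_le_coe_iff] at hz h1
    have hdes := pgd_descent hdiff hlip xstar z
    have hzx : z - xstar = t • (u - xstar) := by rw [hzdef]; module
    rw [hzx, real_inner_smul_right, norm_smul, Real.norm_eq_abs, mul_pow, sq_abs] at hdes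
    have key : 0 ≤ t * (⟪f' xstar, u - xstar⟫_ℝ + (Gu - Gs)
        + t * (L / 2 * ‖u - xstar‖ ^ 2)) := by nlinarith [hz, h1, hdes]
    have h4 : (0:ℝ) ≤ ⟪f' xstar, u - xstar⟫_ℝ + (Gu - Gs)
        + t * (L / 2 * ‖u - xstar‖ ^ 2) :=
      le_of_mul_le_mul_left (by simpa using key) ht0
    nlinarith [h4, mul_nonneg ht0.le (mul_nonneg (by linarith : (0:ℝ) ≤ L/2) (sq_nonneg ‖u - xstar‖))]
  -- prox optimality inequality at each iterate
  have proxineq : ∀ (k : ℕ) (Gu : ℝ), g (x (k+1)) = (Gu : EReal) →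
      0 ≤ ⟪x (k+1) - (x k - α • f' (x k)), xstar - x (k+1)⟫_ℝ + α * (Gs - Gu) := by
    intro k Gu hgu
    refine pgd_aux_nonneg _ (‖xstar - x (k+1)‖ ^ 2 / 2) (by positivity) ?_
    intro t ht0 ht1
    have hz := hconv xstar (x (k+1)) t ht0.le ht1
    rw [hgu, hgseq, ← EReal.coe_mul, ← EReal.coe_mul, ← EReal.coe_add] at hz
    set z := t • xstar + (1 - t) • x (k+1) with hzdef
    have h1 := hstep k z
    have h2 : (α : EReal) * g z ≤ ((α * (t * Gs + (1 - t) * Gu) : ℝ) : EReal) := by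
      calc (α : EReal) * g z ≤ (α : EReal) * ((t * Gs + (1 - t) * Gu : ℝ) : EReal) :=
            mul_le_mul_of_nonneg_left hz (by exact_mod_cast hα.le)
        _ = _ := by rw [← EReal.coe_mul]
    have h3 := le_trans h1 (add_le_add_right h2 _)
    rw [hgu, ← EReal.coe_mul, ← EReal.coe_add, ← EReal.coe_add, EReal.coe_le_coe_iff] at h3
    have hzp : z - (x k - α • f' (x k))
        = (x (k+1) - (x k - α • f' (x k))) + t • (xstar - x (k+1)) := by
      rw [hzdef]; module
    rw [hzp, norm_add_sq_real, real_inner_smul_right, norm_smul, Real.norm_eq_abs,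
      mul_pow, sq_abs] at h3
    have key : 0 ≤ t * (⟪x (k+1) - (x k - α • f' (x k)), xstar - x (k+1)⟫_ℝ + α * (Gs - Gu)
        + t * (‖xstar - x (k+1)‖ ^ 2 / 2)) := by nlinarith [h3]
    have h4 : (0:ℝ) ≤ ⟪x (k+1) - (x k - α • f' (x k)), xstar - x (k+1)⟫_ℝ + α * (Gs - Gu)
        + t * (‖xstar - x (k+1)‖ ^ 2 / 2) :=
      le_of_mul_le_mul_left (by simpa using key) ht0
    linarith
  -- one-step contraction
  have step : ∀ k, ‖x (k+1) - xstar‖ ≤ Q * ‖x k - xstar‖ := by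
    intro k
    set u := x (k+1) with hudef
    set p := x k - α • f' (x k) with hp
    set q := xstar - α • f' xstar with hq
    have hGu : g u = (((g u).toReal : ℝ) : EReal) := ((g u).coe_toReal (hfin k) (hnotbot u)).symm
    set Gu := (g u).toReal with hGudef
    have h1 := proxineq k Gu hGu
    have h2 := subgrad u Gu hGu
    have h2' := mul_le_mul_of_nonneg_left h2 hα.le
    have h3 : 0 ≤ ⟪u - p, xstar - u⟫_ℝ + α * ⟪f' xstar, u - xstar⟫_ℝ := by nlinarith [h1, h2']
    have e1 : α * ⟪f' xstar, u - xstar⟫_ℝ = ⟪α • f' xstar, u - xstar⟫_ℝ :=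
      (real_inner_smul_left _ _ _).symm
    have e2 : α • f' xstar = xstar - q := by rw [hq]; module
    have e3 : ⟪u - p, xstar - u⟫_ℝ = -⟪u - p, u - xstar⟫_ℝ := by
      rw [show xstar - u = -(u - xstar) from by abel, inner_neg_right]
    rw [e1, e2, e3] at h3
    have e4 : ⟪xstar - q, u - xstar⟫_ℝ - ⟪u - p, u - xstar⟫_ℝ
        = ⟪(xstar - q) - (u - p), u - xstar⟫_ℝ := (inner_sub_left _ _ _).symm
    have e5 : (xstar - q) - (u - p) = (p - q) - (u - xstar) := by abel
    have e6 : ⟪(p - q) - (u - xstar), u - xstar⟫_ℝ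
        = ⟪p - q, u - xstar⟫_ℝ - ‖u - xstar‖ ^ 2 := by
      rw [inner_sub_left, real_inner_self_eq_norm_sq]
    have h4 : ‖u - xstar‖ ^ 2 ≤ ⟪p - q, u - xstar⟫_ℝ := by
      have e7 : ⟪xstar - q, u - xstar⟫_ℝ - ⟪u - p, u - xstar⟫_ℝ
          = ⟪p - q, u - xstar⟫_ℝ - ‖u - xstar‖ ^ 2 := by rw [e4, e5, e6]
      linarith
    have h5 : ⟪p - q, u - xstar⟫_ℝ ≤ ‖p - q‖ * ‖u - xstar‖ := real_inner_le_norm _ _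
    have h6 : ‖p - q‖ ≤ Q * ‖x k - xstar‖ := by
      rw [hp, hq]
      exact pgd_contraction hμ hμL hα hdiff hsc hlip (x k) xstar
    rcases eq_or_lt_of_le (norm_nonneg (u - xstar)) with h0 | h0
    · rw [← h0]
      exact mul_nonneg hQ0 (norm_nonneg _)
    · have h7 : ‖u - xstar‖ ≤ ‖p - q‖ := by nlinarith [le_trans h4 h5, h0]
      exact le_trans h7 h6
  have main : ∀ k, ‖x k - xstar‖ ≤ Q ^ k * ‖x 0 - xstar‖ := by
    intro k
    induction k with
    | zero => simp
    | succ k ih =>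
      calc ‖x (k+1) - xstar‖ ≤ Q * ‖x k - xstar‖ := step k
        _ ≤ Q * (Q ^ k * ‖x 0 - xstar‖) := mul_le_mul_of_nonneg_left ih hQ0
        _ = Q ^ (k+1) * ‖x 0 - xstar‖ := by ring
  intro k _
  exact main k
end

section
/- With step-size α = 1/L, the proximal gradient method satisfies ‖x^k − x*‖ ≤ (1 − μ/L)^k ‖x⁰ − x*‖ for all k ≥ 1. -/
open InnerProductSpace
variable {n : ℕ}
local notation "E" => EuclideanSpace ℝ (Fin n)

lemma lineDeriv7 (f : E → ℝ) (f' : E → E) (hdiff : ∀ x, HasGradientAt f (f' x) x)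
    (x d : E) (t : ℝ) : HasDerivAt (fun s : ℝ => f (x + s • d)) ⟪f' (x + t • d), d⟫_ℝ t := by
  have h1 : HasDerivAt (fun s : ℝ => x + s • d) d t := by
    simpa using ((hasDerivAt_id t).smul_const d).const_add x
  have h2 := (hasGradientAt_iff_hasFDerivAt.mp (hdiff (x + t • d))).comp_hasDerivAt t h1
  exact h2

lemma descent7 (L : ℝ) (hL : 0 ≤ L) (f : E → ℝ) (f' : E → E)
    (hdiff : ∀ x, HasGradientAt f (f' x) x)
    (hlip : ∀ x y, ‖f' x - f' y‖ ≤ L * ‖x - y‖) (x y : E) :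
    f y ≤ f x + ⟪f' x, y - x⟫_ℝ + L / 2 * ‖y - x‖ ^ 2 := by
  set d := y - x with hd
  have hline : ∀ t : ℝ, x + t • d = x + t • d := fun _ => rfl
  have hcont : Continuous f' := by
    have : LipschitzWith (Real.toNNReal L) f' := by
      apply LipschitzWith.of_dist_le_mul
      intro a b
      rw [dist_eq_norm, dist_eq_norm]
      calc ‖f' a - f' b‖ ≤ L * ‖a - b‖ := hlip a b
        _ ≤ (Real.toNNReal L) * ‖a - b‖ := by
            gcongr; exact le_max_left _ _
    exact this.continuous
  have hcψ : Continuous (fun t : ℝ => ⟪f' (x + t • d), d⟫_ℝ) := by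
    apply Continuous.inner
    · exact hcont.comp (by continuity)
    · exact continuous_const
  have key : ∀ t : ℝ, HasDerivAt (fun s : ℝ => f (x + s • d)) ⟪f' (x + t • d), d⟫_ℝ t :=
    lineDeriv7 f f' hdiff x d
  have hint : ∫ t in (0:ℝ)..1, ⟪f' (x + t • d), d⟫_ℝ = f y - f x := by
    have := intervalIntegral.integral_eq_sub_of_hasDerivAt (f := fun s : ℝ => f (x + s • d))
      (f' := fun t : ℝ => ⟪f' (x + t • d), d⟫_ℝ) (a := 0) (b := 1)
      (fun t _ => key t) (hcψ.intervalIntegrable 0 1)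
    simpa [hd] using this
  have hmono : ∫ t in (0:ℝ)..1, ⟪f' (x + t • d), d⟫_ℝ ≤
      ∫ t in (0:ℝ)..1, (⟪f' x, d⟫_ℝ + L * t * ‖d‖ ^ 2) := by
    apply intervalIntegral.integral_mono_on (by norm_num) (hcψ.intervalIntegrable 0 1)
      ((by continuity : Continuous (fun t : ℝ => ⟪f' x, d⟫_ℝ + L * t * ‖d‖ ^ 2)).intervalIntegrable 0 1)
    intro t ht
    have h1 : ⟪f' (x + t • d), d⟫_ℝ - ⟪f' x, d⟫_ℝ = ⟪f' (x + t • d) - f' x, d⟫_ℝ := by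
      rw [inner_sub_left]
    have h2 : ⟪f' (x + t • d) - f' x, d⟫_ℝ ≤ ‖f' (x + t • d) - f' x‖ * ‖d‖ :=
      real_inner_le_norm _ _
    have h3 : ‖f' (x + t • d) - f' x‖ ≤ L * (t * ‖d‖) := by
      have := hlip (x + t • d) x
      simpa [norm_smul, abs_of_nonneg ht.1] using this
    nlinarith [norm_nonneg d, norm_nonneg (f' (x + t • d) - f' x), mul_nonneg (mul_nonneg hL ht.1) (norm_nonneg d)]
  have hval : ∫ t in (0:ℝ)..1, (⟪f' x, d⟫_ℝ + L * t * ‖d‖ ^ 2) =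
      ⟪f' x, d⟫_ℝ + L / 2 * ‖d‖ ^ 2 := by
    have he : ∫ t in (0:ℝ)..1, (⟪f' x, d⟫_ℝ + L * t * ‖d‖ ^ 2) =
        ∫ t in (0:ℝ)..1, (⟪f' x, d⟫_ℝ + (L * ‖d‖ ^ 2) * t) := by
      congr 1; ext t; ring
    rw [he, intervalIntegral.integral_add (g := fun t : ℝ => (L * ‖d‖ ^ 2) * t) intervalIntegrable_const
      ((continuous_const.mul (continuous_id')).intervalIntegrable 0 1),
      intervalIntegral.integral_const_mul]
    simp [integral_id]
    ring
  linarith [hint ▸ hmono, hval ▸ hmono]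

lemma coco7 (M : ℝ) (hM : 0 < M) (h : E → ℝ) (h' : E → E)
    (hcvx : ∀ p q, h p + ⟪h' p, q - p⟫_ℝ ≤ h q)
    (hdes : ∀ p q, h q ≤ h p + ⟪h' p, q - p⟫_ℝ + M / 2 * ‖q - p‖ ^ 2) (p q : E) :
    (1 / M) * ‖h' p - h' q‖ ^ 2 ≤ ⟪h' p - h' q, p - q⟫_ℝ := by
  have one : ∀ p q : E, h p + ⟪h' p, q - p⟫_ℝ + 1 / (2 * M) * ‖h' q - h' p‖ ^ 2 ≤ h q := by
    intro p q
    set u := h' q - h' p with hu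
    have hz := hdes q (q - (1 / M) • u)
    have hc := hcvx p (q - (1 / M) • u)
    have e1 : ⟪h' q, (q - (1 / M) • u) - q⟫_ℝ = -(1 / M * ⟪h' q, u⟫_ℝ) := by
      rw [show (q - (1 / M) • u) - q = -((1 / M) • u) by abel, inner_neg_right,
        real_inner_smul_right]
    have e2 : ‖(q - (1 / M) • u) - q‖ ^ 2 = (1 / M) ^ 2 * ‖u‖ ^ 2 := by
      rw [show (q - (1 / M) • u) - q = -((1 / M) • u) by abel, norm_neg, norm_smul]
      simp [abs_of_pos hM]
      ring
    have e3 : ⟪h' p, (q - (1 / M) • u) - p⟫_ℝ = ⟪h' p, q - p⟫_ℝ - 1 / M * ⟪h' p, u⟫_ℝ := by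
      rw [show (q - (1 / M) • u) - p = (q - p) - (1 / M) • u by abel, inner_sub_right,
        real_inner_smul_right]
    have e4 : ⟪h' q, u⟫_ℝ - ⟪h' p, u⟫_ℝ = ‖u‖ ^ 2 := by
      rw [← inner_sub_left, ← hu, real_inner_self_eq_norm_sq]
    rw [e1, e2] at hz
    rw [e3] at hc
    have hMne : M ≠ 0 := ne_of_gt hM
    have em : M / 2 * ((1 / M) ^ 2 * ‖u‖ ^ 2) = 1 / (2 * M) * ‖u‖ ^ 2 := by
      field_simp
    rw [em] at hz
    have e4' : 1 / M * ⟪h' q, u⟫_ℝ - 1 / M * ⟪h' p, u⟫_ℝ = 1 / M * ‖u‖ ^ 2 := by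
      rw [← mul_sub, e4]
    have e8 : 1 / M * ‖u‖ ^ 2 = 1 / (2 * M) * ‖u‖ ^ 2 + 1 / (2 * M) * ‖u‖ ^ 2 := by
      field_simp; ring
    linarith
  have A := one p q
  have B := one q p
  have e5 : ⟪h' p, q - p⟫_ℝ = -⟪h' p, p - q⟫_ℝ := by
    rw [show q - p = -(p - q) by abel, inner_neg_right]
  have e6 : ‖h' q - h' p‖ = ‖h' p - h' q‖ := norm_sub_rev _ _
  have e7 : ⟪h' p - h' q, p - q⟫_ℝ = ⟪h' p, p - q⟫_ℝ - ⟪h' q, p - q⟫_ℝ := inner_sub_left _ _ _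
  rw [e5, e6] at A
  have hMne : M ≠ 0 := ne_of_gt hM
  rw [e7]
  have e8 : 1 / M * ‖h' p - h' q‖ ^ 2 =
      1 / (2 * M) * ‖h' p - h' q‖ ^ 2 + 1 / (2 * M) * ‖h' p - h' q‖ ^ 2 := by
    field_simp; ring
  linarith

lemma contract7 (μ L : ℝ) (hμ : 0 < μ) (hμL : μ ≤ L) (f : E → ℝ) (f' : E → E)
    (hdiff : ∀ x, HasGradientAt f (f' x) x)
    (hsc : ∀ x y, f y ≥ f x + ⟪f' x, y - x⟫_ℝ + μ / 2 * ‖y - x‖ ^ 2)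
    (hlip : ∀ x y, ‖f' x - f' y‖ ≤ L * ‖x - y‖) (a b : E) :
    ‖(a - (1/L) • f' a) - (b - (1/L) • f' b)‖ ≤ (1 - μ / L) * ‖a - b‖ := by
  have hL : 0 < L := lt_of_lt_of_le hμ hμL
  have hLne : L ≠ 0 := ne_of_gt hL
  set d := a - b with hdd
  set w := f' a - f' b with hww
  have eqv : (a - (1/L) • f' a) - (b - (1/L) • f' b) = d - (1/L) • w := by
    rw [hdd, hww, smul_sub]; abel
  have mono : μ * ‖d‖ ^ 2 ≤ ⟪d, w⟫_ℝ := by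
    have h1 := hsc a b
    have h2 := hsc b a
    have ea : ⟪f' a, b - a⟫_ℝ = -⟪f' a, d⟫_ℝ := by
      rw [show b - a = -d by rw [hdd]; abel, inner_neg_right]
    have eb : ‖b - a‖ = ‖d‖ := by rw [hdd, norm_sub_rev]
    have ew : ⟪d, w⟫_ℝ = ⟪f' a, d⟫_ℝ - ⟪f' b, d⟫_ℝ := by
      rw [real_inner_comm, hww, inner_sub_left]
    rw [ea, eb] at h1
    rw [ew]
    linarith
  have hwd : ‖w‖ ≤ L * ‖d‖ := hlip a b
  have hq : 0 ≤ 1 - μ / L := by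
    rw [sub_nonneg]; exact (div_le_one hL).mpr hμL
  have hsq : ‖d - (1/L) • w‖ ^ 2 ≤ ((1 - μ / L) * ‖d‖) ^ 2 := by
    rcases eq_or_lt_of_le hμL with heq | hlt
    · -- μ = L
      have ex : ‖d - (1/L) • w‖ ^ 2 = ‖d‖ ^ 2 - 2 * ((1/L) * ⟪d, w⟫_ℝ) + (1/L) ^ 2 * ‖w‖ ^ 2 := by
        rw [norm_sub_sq_real, real_inner_smul_right, norm_smul, Real.norm_eq_abs,
          abs_of_pos (one_div_pos.mpr hL)]
        ring
      have hw2 : ‖w‖ ^ 2 ≤ (L * ‖d‖) ^ 2 := pow_le_pow_left₀ (norm_nonneg _) hwd 2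
      have m1 : ‖d‖ ^ 2 ≤ (1/L) * ⟪d, w⟫_ℝ := by
        have : (1/L) * (μ * ‖d‖ ^ 2) ≤ (1/L) * ⟪d, w⟫_ℝ :=
          mul_le_mul_of_nonneg_left mono (le_of_lt (one_div_pos.mpr hL))
        rw [← heq] at hL ⊢
        calc ‖d‖ ^ 2 = (1/μ) * (μ * ‖d‖ ^ 2) := by field_simp
          _ ≤ _ := by rw [heq]; rw [heq] at this; exact this
      have m2 : (1/L) ^ 2 * ‖w‖ ^ 2 ≤ ‖d‖ ^ 2 := by
        calc (1/L) ^ 2 * ‖w‖ ^ 2 ≤ (1/L) ^ 2 * (L * ‖d‖) ^ 2 := by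
              apply mul_le_mul_of_nonneg_left hw2; positivity
          _ = ‖d‖ ^ 2 := by field_simp
      have hrhs : ((1 - μ / L) * ‖d‖) ^ 2 = 0 := by
        rw [heq]; field_simp; simp
      rw [ex, hrhs]
      linarith
    · -- μ < L
      set M := L - μ with hM
      have hMpos : 0 < M := by rw [hM]; linarith
      have hMne : M ≠ 0 := ne_of_gt hMpos
      set h := fun z : E => f z - μ / 2 * ‖z‖ ^ 2 with hh
      set h' := fun z : E => f' z - μ • z with hh'
      have hiden : ∀ p q : E, ⟪f' p - μ • p, q - p⟫_ℝ + μ / 2 * ‖q‖ ^ 2 - μ / 2 * ‖p‖ ^ 2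
          = ⟪f' p, q - p⟫_ℝ + μ / 2 * ‖q - p‖ ^ 2 := by
        intro p q
        rw [norm_sub_sq_real]
        simp only [inner_sub_left, inner_sub_right, real_inner_smul_left,
          real_inner_self_eq_norm_sq]
        rw [real_inner_comm q p]
        ring
      have hcvx : ∀ p q : E, h p + ⟪h' p, q - p⟫_ℝ ≤ h q := by
        intro p q
        have := hsc p q
        have hi := hiden p q
        simp only [hh, hh']
        linarith
      have hdes : ∀ p q : E, h q ≤ h p + ⟪h' p, q - p⟫_ℝ + M / 2 * ‖q - p‖ ^ 2 := by
        intro p q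
        have := descent7 L (le_of_lt hL) f f' hdiff hlip p q
        have hi := hiden p q
        simp only [hh, hh', hM]
        have hLM : (L - μ) / 2 * ‖q - p‖ ^ 2 = L / 2 * ‖q - p‖ ^ 2 - μ / 2 * ‖q - p‖ ^ 2 := by ring
        linarith
      have coco := coco7 M hMpos h h' hcvx hdes a b
      set u := h' a - h' b with hu
      have huw : u = w - μ • d := by
        rw [hu, hh', hww, hdd]; simp [smul_sub]; abel
      have key : (1 / M) * ‖u‖ ^ 2 ≤ ⟪d, u⟫_ℝ := by
        rw [real_inner_comm]; exact coco
      have eqv2 : d - (1/L) • w = (1 - μ / L) • d - (1/L) • u := by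
        rw [huw]
        module
      have ex : ‖d - (1/L) • w‖ ^ 2 = (1 - μ / L) ^ 2 * ‖d‖ ^ 2
          - 2 * ((1 - μ / L) * (1/L) * ⟪d, u⟫_ℝ) + (1/L) ^ 2 * ‖u‖ ^ 2 := by
        rw [eqv2, norm_sub_sq_real, real_inner_smul_left, real_inner_smul_right,
          norm_smul, norm_smul]
        simp only [Real.norm_eq_abs]
        rw [abs_of_nonneg hq, abs_of_pos (one_div_pos.mpr hL)]
        ring
      have hcoeff : 0 ≤ 2 * ((1 - μ / L) * (1/L)) := by positivity
      have h2 : 2 * ((1 - μ / L) * (1/L)) * ((1 / M) * ‖u‖ ^ 2)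
          ≤ 2 * ((1 - μ / L) * (1/L)) * ⟪d, u⟫_ℝ :=
        mul_le_mul_of_nonneg_left key hcoeff
      have hstep : 2 * ((1 - μ / L) * (1/L)) * ((1 / M) * ‖u‖ ^ 2)
          = 2 * ((1/L) ^ 2 * ‖u‖ ^ 2) := by
        rw [show 1 - μ / L = M / L by rw [hM]; field_simp]
        field_simp
      have hrhs : ((1 - μ / L) * ‖d‖) ^ 2 = (1 - μ / L) ^ 2 * ‖d‖ ^ 2 := by ring
      rw [ex, hrhs]
      nlinarith [sq_nonneg ‖u‖, sq_nonneg (1/L)]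
  calc ‖(a - (1/L) • f' a) - (b - (1/L) • f' b)‖ = ‖d - (1/L) • w‖ := by rw [eqv]
    _ ≤ (1 - μ / L) * ‖d‖ := by
        have h1 := Real.sqrt_le_sqrt hsq
        rwa [Real.sqrt_sq (norm_nonneg _), Real.sqrt_sq (mul_nonneg hq (norm_nonneg _))] at h1
    _ = (1 - μ / L) * ‖a - b‖ := by rw [hdd]

lemma quadNonneg7 (A B : ℝ) (hB : 0 ≤ B)
    (h : ∀ t ∈ Set.Ioc (0:ℝ) 1, 0 ≤ t * A + t ^ 2 * B) : 0 ≤ A := by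
  by_contra hA
  push_neg at hA
  set t := min 1 (-A / (2 * B + 1)) with htdef
  have hden : 0 < 2 * B + 1 := by linarith
  have ht0 : 0 < t := lt_min one_pos (div_pos (by linarith) hden)
  have ht1 : t ≤ 1 := min_le_left _ _
  have ht2 : t ≤ -A / (2 * B + 1) := min_le_right _ _
  have h1 : t * (2 * B + 1) ≤ -A := (le_div_iff₀ hden).mp ht2
  have h2 := h t ⟨ht0, ht1⟩
  nlinarith [mul_nonneg ht0.le hB, mul_pos ht0 ht0]

lemma derivNonneg7 (ψ : ℝ → ℝ) (m : ℝ) (hd : HasDerivAt ψ m 0)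
    (hmin : ∀ t ∈ Set.Ioc (0:ℝ) 1, ψ 0 ≤ ψ t) : 0 ≤ m := by
  rw [hasDerivAt_iff_tendsto_slope] at hd
  have h2 : Filter.Tendsto (slope ψ 0) (nhdsWithin 0 (Set.Ioi 0)) (nhds m) :=
    hd.mono_left (nhdsWithin_mono 0 (fun t ht => ne_of_gt ht))
  refine ge_of_tendsto h2 ?_
  filter_upwards [Ioc_mem_nhdsGT_of_mem ⟨le_refl (0:ℝ), zero_lt_one⟩] with t ht
  have := hmin t ht
  rw [slope_def_field]
  have : 0 ≤ (ψ t - ψ 0) / (t - 0) := by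
    apply div_nonneg (by linarith) (by linarith [ht.1])
  simpa [div_eq_inv_mul] using this

/-- Linear convergence of the proximal gradient method with step size `1/L`:
`‖x^k - x*‖ ≤ (1 - μ/L)^k ‖x⁰ - x*‖`. -/
theorem stmt_7 {n : ℕ} (μ L : ℝ) (hμ : 0 < μ) (hμL : μ ≤ L)
    (f : EuclideanSpace ℝ (Fin n) → ℝ)
    (f' : EuclideanSpace ℝ (Fin n) → EuclideanSpace ℝ (Fin n))
    (hdiff : ∀ x, HasGradientAt f (f' x) x)
    (hsc : ∀ x y, f y ≥ f x + ⟪f' x, y - x⟫_ℝ + μ / 2 * ‖y - x‖ ^ 2)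
    (hlip : ∀ x y, ‖f' x - f' y‖ ≤ L * ‖x - y‖)
    (g : EuclideanSpace ℝ (Fin n) → EReal)
    (hproper : ∃ x, g x ≠ ⊤) (hnotbot : ∀ x, g x ≠ ⊥)
    (hconv : ∀ x y : EuclideanSpace ℝ (Fin n), ∀ t : ℝ, 0 ≤ t → t ≤ 1 →
      g (t • x + (1 - t) • y) ≤ (t : EReal) * g x + ((1 - t : ℝ) : EReal) * g y)
    (hlsc : LowerSemicontinuous g)
    (xstar : EuclideanSpace ℝ (Fin n))
    (hmin : ∀ y, (f xstar : EReal) + g xstar ≤ (f y : EReal) + g y)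
    (x : ℕ → EuclideanSpace ℝ (Fin n))
    (hstep : ∀ k, ∀ y,
      ((1/2 * ‖x (k+1) - (x k - (1/L) • f' (x k))‖^2 : ℝ) : EReal) + ((1/L : ℝ) : EReal) * g (x (k+1)) ≤
      ((1/2 * ‖y - (x k - (1/L) • f' (x k))‖^2 : ℝ) : EReal) + ((1/L : ℝ) : EReal) * g y) :
    ∀ k : ℕ, 1 ≤ k → ‖x k - xstar‖ ≤ (1 - μ / L) ^ k * ‖x 0 - xstar‖ := by
  have hL : 0 < L := lt_of_lt_of_le hμ hμL
  have hLne : L ≠ 0 := ne_of_gt hL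
  have hinvL : 0 < 1/L := one_div_pos.mpr hL
  obtain ⟨y₀, hy₀⟩ := hproper
  set G : EuclideanSpace ℝ (Fin n) → ℝ := fun z => (g z).toReal with hG
  have hcoe : ∀ z, g z ≠ ⊤ → g z = ((G z : ℝ) : EReal) :=
    fun z hz => (EReal.coe_toReal hz (hnotbot z)).symm
  -- g xstar is finite
  have hfxs : g xstar ≠ ⊤ := by
    intro htop
    have h1 := hmin y₀
    rw [htop, EReal.coe_add_top, hcoe y₀ hy₀, ← EReal.coe_add, top_le_iff] at h1
    exact EReal.coe_ne_top _ h1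
  -- g (x (k+1)) is finite
  have hfx : ∀ k, g (x (k+1)) ≠ ⊤ := by
    intro k htop
    have h1 := hstep k y₀
    rw [htop, EReal.coe_mul_top_of_pos hinvL, EReal.coe_add_top, hcoe y₀ hy₀,
      ← EReal.coe_mul, ← EReal.coe_add, top_le_iff] at h1
    exact EReal.coe_ne_top _ h1
  -- real version of convexity
  have hconvR : ∀ p q : EuclideanSpace ℝ (Fin n), g p ≠ ⊤ → g q ≠ ⊤ → ∀ t : ℝ, 0 ≤ t → t ≤ 1 →
      g (t • p + (1 - t) • q) ≤ ((t * G p + (1 - t) * G q : ℝ) : EReal) := by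
    intro p q hp hq t h0 h1
    have := hconv p q t h0 h1
    rwa [hcoe p hp, hcoe q hq, ← EReal.coe_mul, ← EReal.coe_mul, ← EReal.coe_add] at this
  -- real version of hmin at finite points
  have hminR : ∀ z, g z ≠ ⊤ → f xstar + G xstar ≤ f z + G z := by
    intro z hz
    have := hmin z
    rwa [hcoe z hz, hcoe xstar hfxs, ← EReal.coe_add, ← EReal.coe_add,
      EReal.coe_le_coe_iff] at this
  -- real version of hstep at finite points
  have hstepR : ∀ k z, g z ≠ ⊤ →
      1/2 * ‖x (k+1) - (x k - (1/L) • f' (x k))‖^2 + 1/L * G (x (k+1)) ≤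
      1/2 * ‖z - (x k - (1/L) • f' (x k))‖^2 + 1/L * G z := by
    intro k z hz
    have := hstep k z
    rwa [hcoe z hz, hcoe (x (k+1)) (hfx k), ← EReal.coe_mul, ← EReal.coe_mul,
      ← EReal.coe_add, ← EReal.coe_add, EReal.coe_le_coe_iff] at this
  -- variational inequality at xstar
  have hVIxs : ∀ p, g p ≠ ⊤ → 0 ≤ ⟪f' xstar, p - xstar⟫_ℝ + (G p - G xstar) := by
    intro p hp
    set dd := p - xstar with hdd
    have hmin2 : ∀ t ∈ Set.Ioc (0:ℝ) 1,
        f (xstar + (0:ℝ) • dd) + (0:ℝ) * (G p - G xstar) ≤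
        f (xstar + t • dd) + t * (G p - G xstar) := by
      intro t ht
      have zid : t • p + (1 - t) • xstar = xstar + t • dd := by rw [hdd]; module
      have hcv := hconvR p xstar hp hfxs t ht.1.le ht.2
      have hzfin : g (t • p + (1 - t) • xstar) ≠ ⊤ :=
        ne_top_of_le_ne_top (EReal.coe_ne_top _) hcv
      have hGz : G (t • p + (1 - t) • xstar) ≤ t * G p + (1 - t) * G xstar := by
        have := hcv
        rw [hcoe _ hzfin, EReal.coe_le_coe_iff] at this
        exact this
      have hm := hminR _ hzfin
      rw [zid] at hGz hm
      simp only [zero_smul, add_zero, zero_mul]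
      linarith
    have hder : HasDerivAt (fun t : ℝ => f (xstar + t • dd) + t * (G p - G xstar))
        (⟪f' xstar, dd⟫_ℝ + (G p - G xstar)) 0 := by
      have h1 := lineDeriv7 f f' hdiff xstar dd 0
      simp only [zero_smul, add_zero] at h1
      exact h1.add (by simpa using (hasDerivAt_mul_const (G p - G xstar)).congr_deriv rfl)
    have := derivNonneg7 _ _ hder (by simpa using hmin2)
    rwa [hdd] at this
  -- variational inequality at the prox point
  have hVIp : ∀ k, 0 ≤ ⟪x (k+1) - (x k - (1/L) • f' (x k)), xstar - x (k+1)⟫_ℝ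
      + 1/L * (G xstar - G (x (k+1))) := by
    intro k
    set p := x (k+1) with hp
    set a := x k - (1/L) • f' (x k) with ha
    set dd := xstar - p with hdd
    apply quadNonneg7 _ (1/2 * ‖dd‖^2) (by positivity)
    intro t ht
    have zid : t • xstar + (1 - t) • p = p + t • dd := by rw [hdd]; module
    have hcv := hconvR xstar p hfxs (hfx k) t ht.1.le ht.2
    have hzfin : g (t • xstar + (1 - t) • p) ≠ ⊤ :=
      ne_top_of_le_ne_top (EReal.coe_ne_top _) hcv
    have hGz : G (t • xstar + (1 - t) • p) ≤ t * G xstar + (1 - t) * G p := by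
      have := hcv
      rw [hcoe _ hzfin, EReal.coe_le_coe_iff] at this
      exact this
    have hm := hstepR k _ hzfin
    rw [zid] at hGz hm
    have hex : ‖p + t • dd - a‖^2 = ‖p - a‖^2 + 2 * (t * ⟪p - a, dd⟫_ℝ) + t^2 * ‖dd‖^2 := by
      rw [show p + t • dd - a = (p - a) + t • dd by abel, norm_add_sq_real,
        real_inner_smul_right, norm_smul, Real.norm_eq_abs, abs_of_pos ht.1]
      ring
    rw [hex] at hm
    have h3 : 1/L * G (p + t • dd) ≤ 1/L * (t * G xstar + (1 - t) * G p) :=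
      mul_le_mul_of_nonneg_left hGz hinvL.le
    nlinarith
  -- per-step contraction
  have hq : 0 ≤ 1 - μ / L := by rw [sub_nonneg]; exact (div_le_one hL).mpr hμL
  have step : ∀ k, ‖x (k+1) - xstar‖ ≤ (1 - μ / L) * ‖x k - xstar‖ := by
    intro k
    set p := x (k+1) with hp
    set a := x k - (1/L) • f' (x k) with ha
    set b := xstar - (1/L) • f' xstar with hb
    set u := p - xstar with hu
    have h1 := hVIxs p (hfx k)
    have h2 := hVIp k
    -- from h1: ⟪(1/L) f' xstar, u⟫ + (1/L)(G p - G xstar) ≥ 0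
    have h1' : 0 ≤ 1/L * ⟪f' xstar, u⟫_ℝ + 1/L * (G p - G xstar) := by
      have := mul_le_mul_of_nonneg_left h1 hinvL.le
      rw [mul_zero] at this
      rw [hu]
      linarith [this, mul_add (1/L) ⟪f' xstar, p - xstar⟫_ℝ (G p - G xstar)]
    have h2' : 0 ≤ -⟪p - a, u⟫_ℝ + 1/L * (G xstar - G p) := by
      have e : ⟪p - a, xstar - p⟫_ℝ = -⟪p - a, u⟫_ℝ := by
        rw [show xstar - p = -u by rw [hu]; abel, inner_neg_right]
      rw [e] at h2
      exact h2
    have hkey : ‖u‖^2 ≤ ⟪a - b, u⟫_ℝ := by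
      have edec : ⟪u, u⟫_ℝ = ⟪p - a, u⟫_ℝ + ⟪a - b, u⟫_ℝ + ⟪b - xstar, u⟫_ℝ := by
        rw [← inner_add_left, ← inner_add_left]
        congr 1
        rw [hu]; abel
      have ebx : ⟪b - xstar, u⟫_ℝ = -(1/L * ⟪f' xstar, u⟫_ℝ) := by
        rw [show b - xstar = -((1/L) • f' xstar) by rw [hb]; abel, inner_neg_left,
          real_inner_smul_left]
      rw [← real_inner_self_eq_norm_sq, edec, ebx]
      linarith
    have hcs : ⟪a - b, u⟫_ℝ ≤ ‖a - b‖ * ‖u‖ := real_inner_le_norm _ _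
    have hub : ‖u‖ ≤ ‖a - b‖ := by
      rcases eq_or_lt_of_le (norm_nonneg u) with h0 | h0
      · rw [← h0]; exact norm_nonneg _
      · have : ‖u‖^2 ≤ ‖a - b‖ * ‖u‖ := le_trans hkey hcs
        nlinarith
    have hab : ‖a - b‖ ≤ (1 - μ / L) * ‖x k - xstar‖ := by
      rw [ha, hb]
      exact contract7 μ L hμ hμL f f' hdiff hsc hlip (x k) xstar
    calc ‖p - xstar‖ = ‖u‖ := by rw [hu]
      _ ≤ ‖a - b‖ := hub
      _ ≤ (1 - μ / L) * ‖x k - xstar‖ := hab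
  -- induction
  have main : ∀ k : ℕ, ‖x k - xstar‖ ≤ (1 - μ / L) ^ k * ‖x 0 - xstar‖ := by
    intro k
    induction k with
    | zero => simp
    | succ m ih =>
      calc ‖x (m+1) - xstar‖ ≤ (1 - μ / L) * ‖x m - xstar‖ := step m
        _ ≤ (1 - μ / L) * ((1 - μ / L) ^ m * ‖x 0 - xstar‖) :=
            mul_le_mul_of_nonneg_left ih hq
        _ = (1 - μ / L) ^ (m+1) * ‖x 0 - xstar‖ := by ring
  exact fun k _ => main k
end

section
/- (Finite active-set identification, step-size 1/L.) Under the nondegeneracy assumption, if ‖x^k − x*‖ ≤ δ/(2L), then the proximal gradient step with step-size 1/L sets x_i^{k+1} = x_i* for every coordinate i in the active-set Z = {i : ∂g_i(x_i*) is not a singleton}, where δ = min_{i∈Z} min{−∇_i f(x*) − l_i, u_i + ∇_i f(x*)} > 0 and (l_i, u_i) is the interior of ∂g_i(x_i*). -/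
open InnerProductSpace

/-- The convex subdifferential of `g : ℝ → ℝ ∪ {∞}` at `y`. -/
def subdiff (g : ℝ → EReal) (y : ℝ) : Set ℝ :=
  {v : ℝ | ∀ z : ℝ, g y + ((v * (z - y) : ℝ) : EReal) ≤ g z}

lemma coord_abs_le {n : ℕ} (w : EuclideanSpace ℝ (Fin n)) (i : Fin n) : |w i| ≤ ‖w‖ := by
  rw [EuclideanSpace.norm_eq]
  rw [show |w i| = Real.sqrt (‖w i‖^2) by
    rw [Real.sqrt_sq (norm_nonneg _)]; exact (Real.norm_eq_abs _).symm]
  exact Real.sqrt_le_sqrt (Finset.single_le_sum (f := fun j => ‖w j‖^2)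
    (fun j _ => sq_nonneg _) (Finset.mem_univ i))

lemma tsmall (A B c : ℝ) (h : ∀ t : ℝ, 0 < t → t < 1 → A + t * B ≤ c) : A ≤ c := by
  by_contra hc
  push_neg at hc
  have hB0 : 0 ≤ |B| := abs_nonneg B
  set t : ℝ := min (1/2) ((A - c)/(2*(|B|+1))) with ht
  have htpos : 0 < t := lt_min (by norm_num) (div_pos (by linarith) (by linarith))
  have ht1 : t < 1 := lt_of_le_of_lt (min_le_left _ _) (by norm_num)
  have h2 := h t htpos ht1
  have h3 : t ≤ (A - c)/(2*(|B|+1)) := min_le_right _ _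
  have h4 : t * (2*(|B|+1)) ≤ A - c := by
    rw [← le_div_iff₀ (by positivity)]; exact h3
  have h5 : -|B| ≤ B := neg_abs_le B
  nlinarith [mul_le_mul_of_nonneg_left h5 htpos.le]

/-- Finite active-set identification for the proximal gradient step with step size `1/L`:
if `‖x^k - x*‖ ≤ δ/(2L)` then the next iterate agrees with `x*` on the active set
`Z = {i : ∂gᵢ(xᵢ*) is not a singleton}`, where
`δ = min_{i ∈ Z} min {-∇ᵢf(x*) - lᵢ, uᵢ + ∇ᵢf(x*)} > 0` and
`(lᵢ, uᵢ) = int ∂gᵢ(xᵢ*)` (nondegeneracy: `-∇ᵢf(x*) ∈ int ∂gᵢ(xᵢ*)` for `i ∈ Z`). -/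
theorem stmt_11 {n : ℕ} (μ L : ℝ) (hμ : 0 < μ) (hμL : μ ≤ L)
    (f : EuclideanSpace ℝ (Fin n) → ℝ)
    (f' : EuclideanSpace ℝ (Fin n) → EuclideanSpace ℝ (Fin n))
    (hdiff : ∀ x, HasGradientAt f (f' x) x)
    (hsc : ∀ x y, f y ≥ f x + ⟪f' x, y - x⟫_ℝ + μ / 2 * ‖y - x‖ ^ 2)
    (hlip : ∀ x y, ‖f' x - f' y‖ ≤ L * ‖x - y‖)
    (g : Fin n → ℝ → EReal)
    (hproper : ∀ i, ∃ t, g i t ≠ ⊤) (hnotbot : ∀ i t, g i t ≠ ⊥)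
    (hconv : ∀ i, ∀ a b t : ℝ, 0 ≤ t → t ≤ 1 →
      g i (t * a + (1 - t) * b) ≤ (t : EReal) * g i a + ((1 - t : ℝ) : EReal) * g i b)
    (hlsc : ∀ i, LowerSemicontinuous (g i))
    (xstar : EuclideanSpace ℝ (Fin n))
    (hmin : ∀ y, (f xstar : EReal) + ∑ i, g i (xstar i) ≤ (f y : EReal) + ∑ i, g i (y i))
    (Z : Set (Fin n)) (hZ : Z = {i | ¬ (subdiff (g i) (xstar i)).Subsingleton})
    (l u : Fin n → EReal)
    (hlu : ∀ i ∈ Z, interior (subdiff (g i) (xstar i)) =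
      {v : ℝ | l i < (v : EReal) ∧ (v : EReal) < u i})
    (hnondegen₁ : ∀ i ∈ Z, (-(f' xstar i)) ∈ interior (subdiff (g i) (xstar i)))
    (hnondegen₂ : ∀ i ∉ Z, (-(f' xstar i)) ∈ subdiff (g i) (xstar i))
    (δ : ℝ) (hδpos : 0 < δ)
    (hδ : ∀ i ∈ Z, (δ : EReal) ≤ ((-(f' xstar i) : ℝ) : EReal) - l i ∧
      (δ : EReal) ≤ u i + ((f' xstar i : ℝ) : EReal))
    (xk xnext : EuclideanSpace ℝ (Fin n))
    (hk : ‖xk - xstar‖ ≤ δ / (2 * L))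
    (hstep : ∀ i, ∀ z : ℝ,
      ((1/2 * (xnext i - (xk i - (1/L) * f' xk i))^2 : ℝ) : EReal)
          + ((1/L : ℝ) : EReal) * g i (xnext i) ≤
      ((1/2 * (z - (xk i - (1/L) * f' xk i))^2 : ℝ) : EReal)
          + ((1/L : ℝ) : EReal) * g i z) :
    ∀ i ∈ Z, xnext i = xstar i := by
  intro i hi
  have hL : 0 < L := lt_of_lt_of_le hμ hμL
  obtain ⟨m, hm⟩ : ∃ m : ℝ, m = -(f' xstar i) := ⟨_, rfl⟩
  have hmint : m ∈ interior (subdiff (g i) (xstar i)) := by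
    rw [hm]; exact hnondegen₁ i hi
  have hmsub : m ∈ subdiff (g i) (xstar i) := interior_subset hmint
  have hlmhu : l i < (m : EReal) ∧ (m : EReal) < u i := by
    have := hmint; rw [hlu i hi] at this; exact this
  obtain ⟨hlm, hmu⟩ := hlmhu
  have hδl : (δ : EReal) ≤ ((m : ℝ) : EReal) - l i := by rw [hm]; exact (hδ i hi).1
  have hδu : (δ : EReal) ≤ u i + (((-m : ℝ)) : EReal) := by
    rw [hm, neg_neg]; exact (hδ i hi).2
  -- g i (xstar i) is real
  obtain ⟨t0, ht0⟩ := hproper i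
  have hGne : g i (xstar i) ≠ ⊤ := by
    intro h
    have h2 := hmsub t0
    rw [h] at h2
    exact ht0 (top_le_iff.mp (by rw [EReal.top_add_coe] at h2; exact h2))
  obtain ⟨G, hG⟩ : ∃ G : ℝ, g i (xstar i) = (G : EReal) :=
    ⟨(g i (xstar i)).toReal, (EReal.coe_toReal hGne (hnotbot i _)).symm⟩
  -- endpoint bounds
  have hlow : ∀ w : ℝ, m - δ < w → l i < (w : EReal) := by
    intro w hw
    rcases eq_or_ne (l i) ⊥ with h | h
    · rw [h]; exact bot_lt_iff_ne_bot.mpr (EReal.coe_ne_bot w)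
    · have hne : l i ≠ ⊤ := ne_top_of_lt hlm
      have hlr : l i = ((l i).toReal : EReal) := (EReal.coe_toReal hne h).symm
      rw [hlr] at hδl ⊢
      have hδl' : δ ≤ m - (l i).toReal := by exact_mod_cast hδl
      exact_mod_cast (by linarith : (l i).toReal < w)
  have hup : ∀ w : ℝ, w < m + δ → (w : EReal) < u i := by
    intro w hw
    rcases eq_or_ne (u i) ⊤ with h | h
    · rw [h]; exact lt_top_iff_ne_top.mpr (EReal.coe_ne_top w)
    · have hne : u i ≠ ⊥ := ne_bot_of_gt hmu
      have hur : u i = ((u i).toReal : EReal) := (EReal.coe_toReal h hne).symm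
      rw [hur] at hδu ⊢
      have hδu' : δ ≤ (u i).toReal + -m := by exact_mod_cast hδu
      have : m + δ ≤ (u i).toReal := by linarith
      exact_mod_cast (by linarith : w < (u i).toReal)
  -- the candidate subgradient v
  obtain ⟨v, hv⟩ : ∃ v : ℝ, v = L * (xk i - xstar i) - f' xk i := ⟨_, rfl⟩
  have hco : |xk i - xstar i| ≤ ‖xk - xstar‖ := coord_abs_le (xk - xstar) i
  have hco2 : |f' xk i - f' xstar i| ≤ L * ‖xk - xstar‖ :=
    le_trans (coord_abs_le (f' xk - f' xstar) i) (hlip xk xstar)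
  have hnn : 0 ≤ ‖xk - xstar‖ := norm_nonneg _
  have hk' : L * ‖xk - xstar‖ ≤ δ / 2 := by
    have := mul_le_mul_of_nonneg_left hk hL.le
    rw [show L * (δ / (2 * L)) = δ / 2 by field_simp] at this
    exact this
  have hvm : |v - m| ≤ δ := by
    have h1 : v - m = L * (xk i - xstar i) - (f' xk i - f' xstar i) := by rw [hv, hm]; ring
    rw [h1]
    calc |L * (xk i - xstar i) - (f' xk i - f' xstar i)|
        ≤ |L * (xk i - xstar i)| + |f' xk i - f' xstar i| := abs_sub _ _
      _ ≤ L * ‖xk - xstar‖ + L * ‖xk - xstar‖ := by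
          rw [abs_mul, abs_of_pos hL]
          exact add_le_add (mul_le_mul_of_nonneg_left hco hL.le) hco2
      _ ≤ δ := by linarith
  have hv1 : m - δ ≤ v := by have := (abs_le.mp hvm).1; linarith
  have hv2 : v ≤ m + δ := by have := (abs_le.mp hvm).2; linarith
  -- v ∈ subdiff g i (xstar i)
  have hvsub : ∀ z : ℝ, (G : EReal) + ((v * (z - xstar i) : ℝ) : EReal) ≤ g i z := by
    intro z
    rcases eq_or_ne (g i z) ⊤ with hz | hz
    · rw [hz]; exact le_top
    · obtain ⟨Gz, hGz⟩ : ∃ Gz : ℝ, g i z = (Gz : EReal) :=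
        ⟨(g i z).toReal, (EReal.coe_toReal hz (hnotbot i z)).symm⟩
      rw [hGz]
      have hreal : G + v * (z - xstar i) ≤ Gz := by
        apply tsmall (G + v * (z - xstar i)) ((m - v) * (z - xstar i))
        intro t ht0' ht1
        obtain ⟨w, hw⟩ : ∃ w : ℝ, w = v + t * (m - v) := ⟨_, rfl⟩
        subst hw
        have hw1 : m - δ < v + t * (m - v) := by
          nlinarith [mul_nonneg (by linarith : (0:ℝ) ≤ 1 - t) (by linarith : 0 ≤ v - (m - δ))]
        have hw2 : v + t * (m - v) < m + δ := by
          nlinarith [mul_nonneg (by linarith : (0:ℝ) ≤ 1 - t) (by linarith : 0 ≤ m + δ - v)]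
        have hwint : v + t * (m - v) ∈ interior (subdiff (g i) (xstar i)) := by
          rw [hlu i hi]; exact ⟨hlow _ hw1, hup _ hw2⟩
        have hws := interior_subset hwint z
        rw [hG, hGz] at hws
        have hwsr : G + (v + t * (m - v)) * (z - xstar i) ≤ Gz := by exact_mod_cast hws
        nlinarith [hwsr]
      exact_mod_cast hreal
  -- g i (xnext i) is real
  have hstepy := hstep i (xstar i)
  have hane : g i (xnext i) ≠ ⊤ := by
    intro h
    rw [h, hG] at hstepy
    rw [EReal.mul_top_of_pos (by exact_mod_cast one_div_pos.mpr hL : (0:EReal) < ((1/L : ℝ) : EReal))] at hstepy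
    rw [show ((1/2 * (xnext i - (xk i - (1/L) * f' xk i))^2 : ℝ) : EReal) + ⊤ = ⊤ from rfl] at hstepy
    have h2 := top_le_iff.mp hstepy
    rw [← EReal.coe_mul, ← EReal.coe_add] at h2
    exact EReal.coe_ne_top _ h2
  obtain ⟨Ga, hGa⟩ : ∃ Ga : ℝ, g i (xnext i) = (Ga : EReal) :=
    ⟨(g i (xnext i)).toReal, (EReal.coe_toReal hane (hnotbot i _)).symm⟩
  rw [hG, hGa] at hstepy
  obtain ⟨c, hc⟩ : ∃ c : ℝ, c = xk i - (1/L) * f' xk i := ⟨_, rfl⟩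
  have hrmain : 1/2 * (xnext i - c)^2 + (1/L) * Ga ≤
      1/2 * (xstar i - c)^2 + (1/L) * G := by
    rw [← EReal.coe_mul, ← EReal.coe_mul, ← EReal.coe_add, ← EReal.coe_add, EReal.coe_le_coe_iff] at hstepy
    rw [hc]; linarith [hstepy]
  have hsubr : G + (L * (c - xstar i)) * (xnext i - xstar i) ≤ Ga := by
    have h1 := hvsub (xnext i)
    rw [hGa] at h1
    have h2 : G + v * (xnext i - xstar i) ≤ Ga := by exact_mod_cast h1
    have h3 : v = L * (c - xstar i) := by rw [hv, hc]; field_simp; ring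
    rw [h3] at h2
    exact h2
  -- conclude
  have hd : 1/L * Ga - 1/L * G ≤ 1/2 * (xstar i - c)^2 - 1/2 * (xnext i - c)^2 := by
    linarith [hrmain]
  have hd2 := mul_le_mul_of_nonneg_left hd hL.le
  have hd3 : L * (1/L * Ga - 1/L * G) = Ga - G := by field_simp
  have hd4 : Ga - G ≤ L * (1/2 * (xstar i - c)^2 - 1/2 * (xnext i - c)^2) := by
    rw [← hd3]; exact hd2
  have key : L * ((xnext i - xstar i)^2 / 2) ≤ 0 := by nlinarith [hsubr, hd4]
  have key2 : (xnext i - xstar i)^2 / 2 ≤ 0 := by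
    have h0 : L * ((xnext i - xstar i)^2 / 2) ≤ L * 0 := by rw [mul_zero]; exact key
    exact (mul_le_mul_iff_right₀ hL).mp h0
  have key3 : (xnext i - xstar i)^2 = 0 := le_antisymm (by linarith) (sq_nonneg _)
  have h5 := pow_eq_zero_iff two_ne_zero |>.mp key3
  linarith [h5]
end

section
/- (Finite active-set identification, general step-size.) Under the nondegeneracy assumption, if 0 < α < 2/L and ‖x^k − x*‖ ≤ δα/3, then the proximal gradient step with step-size α sets x_i^{k+1} = x_i* for every i in the active-set Z. -/
open InnerProductSpace

lemma coord_abs_le_norm {n : ℕ} (y : EuclideanSpace ℝ (Fin n)) (i : Fin n) :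
    |y i| ≤ ‖y‖ := by
  rw [EuclideanSpace.norm_eq]
  have h1 : ‖y i‖ ^ 2 ≤ ∑ j, ‖y j‖ ^ 2 :=
    Finset.single_le_sum (f := fun j => ‖y j‖ ^ 2) (fun j _ => sq_nonneg _) (Finset.mem_univ i)
  have := Real.sqrt_le_sqrt h1
  rwa [Real.sqrt_sq_eq_abs, abs_norm, Real.norm_eq_abs] at this

lemma quad_aux {α r s p xs xn v : ℝ} (hα : 0 < α)
    (h1 : 1/2*(xn-p)^2 + α*s ≤ 1/2*(xs-p)^2 + α*r)
    (h2 : r + v*(xn - xs) ≤ s) (hv : v*α = p - xs) : xn = xs := by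
  have h3 := mul_le_mul_of_nonneg_left h2 hα.le
  have h5 : α*(v*(xn-xs)) = (p-xs)*(xn-xs) := by
    rw [show α*(v*(xn-xs)) = (v*α)*(xn-xs) from by ring, hv]
  have hid : 1/2*(xn-p)^2 + (p-xs)*(xn-xs) - 1/2*(xs-p)^2 = 1/2*(xn-xs)^2 := by ring
  have hq : (xn - xs)^2 ≤ 0 := by nlinarith [h3, h5, hid, h1]
  have h4 : xn - xs = 0 := pow_eq_zero_iff two_ne_zero |>.mp (le_antisymm hq (sq_nonneg _))
  linarith

/-- Finite active-set identification for the proximal gradient step with step size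
`0 < α < 2/L`: if `‖x^k - x*‖ ≤ δα/3` then the next iterate agrees with `x*` on the active set
`Z = {i : ∂gᵢ(xᵢ*) is not a singleton}`, where
`δ = min_{i ∈ Z} min {-∇ᵢf(x*) - lᵢ, uᵢ + ∇ᵢf(x*)} > 0` and
`(lᵢ, uᵢ) = int ∂gᵢ(xᵢ*)` (nondegeneracy: `-∇ᵢf(x*) ∈ int ∂gᵢ(xᵢ*)` for `i ∈ Z`). -/
theorem stmt_12 {n : ℕ} (μ L : ℝ) (hμ : 0 < μ) (hμL : μ ≤ L)
    (f : EuclideanSpace ℝ (Fin n) → ℝ)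
    (f' : EuclideanSpace ℝ (Fin n) → EuclideanSpace ℝ (Fin n))
    (hdiff : ∀ x, HasGradientAt f (f' x) x)
    (hsc : ∀ x y, f y ≥ f x + ⟪f' x, y - x⟫_ℝ + μ / 2 * ‖y - x‖ ^ 2)
    (hlip : ∀ x y, ‖f' x - f' y‖ ≤ L * ‖x - y‖)
    (g : Fin n → ℝ → EReal)
    (hproper : ∀ i, ∃ t, g i t ≠ ⊤) (hnotbot : ∀ i t, g i t ≠ ⊥)
    (hconv : ∀ i, ∀ a b t : ℝ, 0 ≤ t → t ≤ 1 →
      g i (t * a + (1 - t) * b) ≤ (t : EReal) * g i a + ((1 - t : ℝ) : EReal) * g i b)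
    (hlsc : ∀ i, LowerSemicontinuous (g i))
    (xstar : EuclideanSpace ℝ (Fin n))
    (hmin : ∀ y, (f xstar : EReal) + ∑ i, g i (xstar i) ≤ (f y : EReal) + ∑ i, g i (y i))
    (Z : Set (Fin n)) (hZ : Z = {i | ¬ (subdiff (g i) (xstar i)).Subsingleton})
    (l u : Fin n → EReal)
    (hlu : ∀ i ∈ Z, interior (subdiff (g i) (xstar i)) =
      {v : ℝ | l i < (v : EReal) ∧ (v : EReal) < u i})
    (hnondegen₁ : ∀ i ∈ Z, (-(f' xstar i)) ∈ interior (subdiff (g i) (xstar i)))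
    (hnondegen₂ : ∀ i ∉ Z, (-(f' xstar i)) ∈ subdiff (g i) (xstar i))
    (δ : ℝ) (hδpos : 0 < δ)
    (hδ : ∀ i ∈ Z, (δ : EReal) ≤ ((-(f' xstar i) : ℝ) : EReal) - l i ∧
      (δ : EReal) ≤ u i + ((f' xstar i : ℝ) : EReal))
    (α : ℝ) (hα : 0 < α) (hα2 : α < 2 / L)
    (xk xnext : EuclideanSpace ℝ (Fin n))
    (hk : ‖xk - xstar‖ ≤ δ * α / 3)
    (hstep : ∀ i, ∀ z : ℝ,
      ((1/2 * (xnext i - (xk i - α * f' xk i))^2 : ℝ) : EReal)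
          + (α : EReal) * g i (xnext i) ≤
      ((1/2 * (z - (xk i - α * f' xk i))^2 : ℝ) : EReal)
          + (α : EReal) * g i z) :
    ∀ i ∈ Z, xnext i = xstar i := by
  intro i hi
  have hL : 0 < L := lt_of_lt_of_le hμ hμL
  have hαL : α * L < 2 := by
    have := (lt_div_iff₀ hL).mp hα2
    linarith
  set p : ℝ := xk i - α * f' xk i with hp
  set v : ℝ := (p - xstar i) / α with hv
  -- componentwise bounds
  have hx : |xk i - xstar i| ≤ δ * α / 3 := by
    have h1 := coord_abs_le_norm (xk - xstar) i
    have h2 : (xk - xstar) i = xk i - xstar i := rfl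
    rw [h2] at h1
    linarith
  have hg : |f' xk i - f' xstar i| ≤ L * (δ * α / 3) := by
    have h1 := coord_abs_le_norm (f' xk - f' xstar) i
    have h2 : (f' xk - f' xstar) i = f' xk i - f' xstar i := rfl
    rw [h2] at h1
    have h3 := hlip xk xstar
    have h4 : L * ‖xk - xstar‖ ≤ L * (δ * α / 3) :=
      mul_le_mul_of_nonneg_left hk hL.le
    linarith
  -- |v - (- f' xstar i)| < δ
  have hvclose : |v + f' xstar i| < δ := by
    have hveq : v + f' xstar i = (xk i - xstar i) / α - (f' xk i - f' xstar i) := by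
      field_simp [hv, hp]
      rw [hv, add_mul, div_mul_cancel₀ _ hα.ne', hp]
      ring
    rw [hveq]
    have h1 : |(xk i - xstar i) / α| ≤ δ / 3 := by
      rw [abs_div, abs_of_pos hα, div_le_iff₀ hα]
      calc |xk i - xstar i| ≤ δ * α / 3 := hx
        _ = δ / 3 * α := by ring
    have h3 : L * (δ * α / 3) < 2 * δ / 3 := by nlinarith
    calc |(xk i - xstar i) / α - (f' xk i - f' xstar i)|
        ≤ |(xk i - xstar i) / α| + |f' xk i - f' xstar i| := abs_sub _ _
      _ < δ := by linarith
  -- v is a subgradient at xstar i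
  have hvmem : v ∈ subdiff (g i) (xstar i) := by
    apply interior_subset (s := subdiff (g i) (xstar i))
    rw [hlu i hi]
    obtain ⟨hδ1, hδ2⟩ := hδ i hi
    have habs := abs_lt.mp hvclose
    constructor
    · -- l i < v
      by_cases hb : l i = ⊥
      · rw [hb]; exact bot_lt_iff_ne_bot.mpr (EReal.coe_ne_bot v)
      · have ht' : l i ≠ ⊤ := by
          intro h
          rw [h, EReal.sub_top] at hδ1
          exact (EReal.coe_ne_bot δ) (le_bot_iff.mp hδ1)
        lift l i to ℝ using ⟨ht', hb⟩ with li hli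
        rw [← EReal.coe_sub, EReal.coe_le_coe_iff] at hδ1
        exact EReal.coe_lt_coe_iff.mpr (by linarith [habs.1])
    · -- v < u i
      by_cases ht' : u i = ⊤
      · rw [ht']; exact lt_top_iff_ne_top.mpr (EReal.coe_ne_top v)
      · have hb : u i ≠ ⊥ := by
          intro h
          rw [h, EReal.bot_add] at hδ2
          exact (EReal.coe_ne_bot δ) (le_bot_iff.mp hδ2)
        lift u i to ℝ using ⟨ht', hb⟩ with ui hui
        rw [← EReal.coe_add, EReal.coe_le_coe_iff] at hδ2
        exact EReal.coe_lt_coe_iff.mpr (by linarith [habs.2])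
  -- g i (xstar i) is finite
  have hv0 : (-(f' xstar i)) ∈ subdiff (g i) (xstar i) :=
    interior_subset (hnondegen₁ i hi)
  obtain ⟨t, ht⟩ := hproper i
  have hgr_top : g i (xstar i) ≠ ⊤ := by
    intro htop
    have := hv0 t
    rw [htop, EReal.top_add_coe] at this
    exact ht (top_le_iff.mp this)
  obtain ⟨r, hr⟩ : ∃ r : ℝ, g i (xstar i) = (r : EReal) :=
    ⟨(g i (xstar i)).toReal, (EReal.coe_toReal hgr_top (hnotbot i _)).symm⟩
  -- g i (xnext i) is finite
  have hstep1 := hstep i (xstar i)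
  have hgs_top : g i (xnext i) ≠ ⊤ := by
    intro htop
    rw [htop, hr, EReal.coe_mul_top_of_pos (by exact_mod_cast hα), EReal.coe_add_top,
      ← EReal.coe_mul, ← EReal.coe_add, top_le_iff] at hstep1
    exact EReal.coe_ne_top _ hstep1
  obtain ⟨s, hs⟩ : ∃ s : ℝ, g i (xnext i) = (s : EReal) :=
    ⟨(g i (xnext i)).toReal, (EReal.coe_toReal hgs_top (hnotbot i _)).symm⟩
  -- real-valued inequalities
  rw [hr, hs, ← EReal.coe_mul, ← EReal.coe_mul, ← EReal.coe_add, ← EReal.coe_add,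
    EReal.coe_le_coe_iff] at hstep1
  have hsub := hvmem (xnext i)
  rw [hr, hs, ← EReal.coe_add, EReal.coe_le_coe_iff] at hsub
  -- combine
  rw [← hp] at hstep1
  have hva : v * α = p - xstar i := by
    rw [hv]; field_simp
  exact quad_aux hα hstep1 hsub hva
end
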